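/- arXiv:1311.3789 — 6 statements merged into one kernel-verified Lean document; each statement's English description precedes it below -/
import Mathlib

section
/- Let G = (V, E) be a compact topological packing graph. Then for every t ∈ ℕ the space I_t of independent sets of cardinality at most t is compact; equivalently, I_t is closed in the compact Hausdorff space sub_t(V). -/
open MeasureTheory Set Topology
open scoped NNReal ENNReal

noncomputable section

universe u

variable {V : Type u}

/-- A set of vertices is independent if it spans no edge of `G`. -/
def IndepVerts (G : SimpleGraph V) (S : Set V) : Prop :=
  ∀ ⦃x⦄, x ∈ S → ∀ ⦃y⦄, y ∈ S → ¬ G.Adj x y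

/-- A graph on a topological vertex set is a (topological) packing graph if every finite
clique is contained in an open clique. -/
def IsPackingGraph [TopologicalSpace V] (G : SimpleGraph V) : Prop :=
  ∀ S : Set V, S.Finite → G.IsClique S → ∃ U : Set V, IsOpen U ∧ S ⊆ U ∧ G.IsClique U

/-- The independence number: the supremum of cardinalities of (finite) independent sets. -/
def alphaNat (G : SimpleGraph V) : ℕ :=
  sSup {n : ℕ | ∃ S : Set V, IndepVerts G S ∧ S.Finite ∧ S.ncard = n}

/-- `sub_t(V)`: the subsets of `V` of cardinality at most `t`. -/
def SubAtMost (V : Type u) (t : ℕ) : Type u := {S : Set V // S.Finite ∧ S.ncard ≤ t}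

/-- The map realizing `sub_t(V)` as a quotient of `V^t ⊕ {∅}`. -/
def qMap (V : Type u) (t : ℕ) : ((Fin t → V) ⊕ Unit) → SubAtMost V t
  | Sum.inl f => ⟨Set.range f, Set.finite_range f, by
      rw [← Set.image_univ]
      refine le_trans (Set.ncard_image_le Set.finite_univ) ?_
      simp [Set.ncard_univ]⟩
  | Sum.inr _ => ⟨∅, Set.finite_empty, by simp⟩

/-- `sub_t(V)` carries the quotient topology of `V^t ⊕ {∅}` (product topology on `V^t`,
empty set adjoined via the disjoint union topology). -/
instance [TopologicalSpace V] (t : ℕ) : TopologicalSpace (SubAtMost V t) :=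
  TopologicalSpace.coinduced (qMap V t) inferInstance

instance [TopologicalSpace V] (t : ℕ) : MeasurableSpace (SubAtMost V t) := borel _

/-- `I_t`: the independent sets of cardinality at most `t`, as a subspace of `sub_t(V)`. -/
def IndepSpace [TopologicalSpace V] (G : SimpleGraph V) (t : ℕ) : Type u :=
  {S : SubAtMost V t // IndepVerts G S.1}

instance [TopologicalSpace V] (G : SimpleGraph V) (t : ℕ) :
    TopologicalSpace (IndepSpace G t) := by unfold IndepSpace; infer_instance

instance [TopologicalSpace V] (G : SimpleGraph V) (t : ℕ) :
    MeasurableSpace (IndepSpace G t) := by unfold IndepSpace; infer_instance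

/-- The empty set as an element of `I_t`. -/
def emptyIndep [TopologicalSpace V] (G : SimpleGraph V) (t : ℕ) : IndepSpace G t :=
  ⟨⟨(∅ : Set V), Set.finite_empty, by simp⟩, by
    intro x hx; exact absurd hx (Set.notMem_empty x)⟩

/-- A continuous kernel is positive definite if it is symmetric and all its finite
evaluation matrices are positive semidefinite. -/
def IsPosDefKernel {X : Type*} [TopologicalSpace X] (K : C(X × X, ℝ)) : Prop :=
  (∀ a b : X, K (a, b) = K (b, a)) ∧
    ∀ (m : ℕ) (x : Fin m → X) (c : Fin m → ℝ),
      0 ≤ ∑ i : Fin m, ∑ j : Fin m, c i * c j * K (x i, x j)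

/-- The operator `A_t`, on plain functions: `A_t K (S) = ∑_{J ∪ J' = S} K(J, J')`. -/
def AtFun [TopologicalSpace V] (G : SimpleGraph V) (t : ℕ)
    (K : IndepSpace G t × IndepSpace G t → ℝ) (S : IndepSpace G (2 * t)) : ℝ :=
  ∑ᶠ (p : IndepSpace G t × IndepSpace G t) (_ : p.1.1.1 ∪ p.2.1.1 = S.1.1), K p

/-- The objective value `λ(I_{=1})` of the generalized Lasserre hierarchy. -/
def lasObj [TopologicalSpace V] (G : SimpleGraph V) (t : ℕ)
    (μ : Measure (IndepSpace G (2 * t))) : ℝ :=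
  (μ {S : IndepSpace G (2 * t) | S.1.1.ncard = 1}).toReal

/-- Feasibility for the `t`-th step of the generalized Lasserre hierarchy: `λ` is a
positive Radon measure on `I_{2t}` with `λ({∅}) = 1` and `A_t^* λ ⪰ 0`. -/
def lasFeasible [TopologicalSpace V] (G : SimpleGraph V) (t : ℕ)
    (μ : Measure (IndepSpace G (2 * t))) : Prop :=
  IsFiniteMeasure μ ∧ μ.Regular ∧ μ {emptyIndep G (2 * t)} = 1 ∧
    ∀ K : C(IndepSpace G t × IndepSpace G t, ℝ), IsPosDefKernel K →
      0 ≤ ∫ S, AtFun G t (fun p => K p) S ∂μ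

/-- `las_t(G)`, the value of the `t`-th step of the generalized Lasserre hierarchy. -/
def lasValue [TopologicalSpace V] (G : SimpleGraph V) (t : ℕ) : ℝ :=
  sSup {v : ℝ | ∃ μ : Measure (IndepSpace G (2 * t)), lasFeasible G t μ ∧ v = lasObj G t μ}

/-- Feasibility for the dual program `las_t(G)^*`. -/
def lasDualFeasible [TopologicalSpace V] (G : SimpleGraph V) (t : ℕ)
    (K : C(IndepSpace G t × IndepSpace G t, ℝ)) : Prop :=
  IsPosDefKernel K ∧
    ∀ S : IndepSpace G (2 * t), S ≠ emptyIndep G (2 * t) →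
      AtFun G t (fun p => K p) S ≤ if S.1.1.ncard = 1 then -1 else 0

/-- `las_t(G)^*`, the value of the dual of the `t`-th step of the hierarchy. -/
def lasDualValue [TopologicalSpace V] (G : SimpleGraph V) (t : ℕ) : ℝ :=
  sInf {v : ℝ | ∃ K : C(IndepSpace G t × IndepSpace G t, ℝ),
    lasDualFeasible G t K ∧ v = K (emptyIndep G t, emptyIndep G t)}

/-- In a packing graph on a Hausdorff space, the adjacency relation is open. -/
lemma adj_isOpen_aux {V : Type u} [TopologicalSpace V] [T2Space V] {G : SimpleGraph V}
    (hG : IsPackingGraph G) : IsOpen {p : V × V | G.Adj p.1 p.2} := by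
  rw [isOpen_iff_mem_nhds]
  rintro ⟨x, y⟩ (hxy : G.Adj x y)
  obtain ⟨U, hUo, hsub, hUc⟩ := hG {x, y} (Set.toFinite _)
    (by rw [SimpleGraph.isClique_pair]; exact fun _ => hxy)
  obtain ⟨Ux, Uy, hUxo, hUyo, hxUx, hyUy, hdisj⟩ := t2_separation hxy.ne
  have hmem : (U ∩ Ux) ×ˢ (U ∩ Uy) ∈ nhds (x, y) := by
    refine prod_mem_nhds ?_ ?_
    · exact (hUo.inter hUxo).mem_nhds ⟨hsub (by simp), hxUx⟩
    · exact (hUo.inter hUyo).mem_nhds ⟨hsub (by simp), hyUy⟩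
  refine Filter.mem_of_superset hmem ?_
  rintro ⟨a, b⟩ ⟨⟨haU, haUx⟩, ⟨hbU, hbUy⟩⟩
  exact hUc haU hbU (fun h => Set.disjoint_left.mp hdisj haUx (h ▸ hbUy))

lemma qMap_surjective {V : Type u} (t : ℕ) : Function.Surjective (qMap V t) := by
  rintro ⟨S, hfin, hcard⟩
  rcases S.eq_empty_or_nonempty with rfl | ⟨v, hv⟩
  · exact ⟨Sum.inr (), rfl⟩
  · have : ∃ l : List V, l.length ≤ t ∧ {a | a ∈ l} = S := by
      refine ⟨hfin.toFinset.toList, ?_, ?_⟩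
      · rw [Finset.length_toList, ← Set.ncard_eq_toFinset_card _ hfin]
        exact hcard
      · ext a; simp
    obtain ⟨l, hl, hlS⟩ := this
    refine ⟨Sum.inl (fun i => l.getD i v), ?_⟩
    apply Subtype.ext
    show Set.range (fun i : Fin t => l.getD i v) = S
    ext a
    constructor
    · rintro ⟨i, rfl⟩
      show l.getD (↑i) v ∈ S
      by_cases h : (i : ℕ) < l.length
      · rw [List.getD_eq_getElem l v h]
        have : l[(i:ℕ)] ∈ l := List.getElem_mem h
        rw [← hlS]; exact this
      · rw [List.getD_eq_default l v (not_lt.mp h)]; exact hv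
    · intro ha
      rw [← hlS] at ha
      obtain ⟨i, hi, hget⟩ := List.mem_iff_getElem.mp ha
      refine ⟨⟨i, lt_of_lt_of_le hi hl⟩, ?_⟩
      show l.getD i v = a
      rw [List.getD_eq_getElem l v hi, hget]

instance subAtMost_compact {V : Type u} [TopologicalSpace V] [CompactSpace V] (t : ℕ) :
    CompactSpace (SubAtMost V t) := by
  constructor
  have h : Continuous (qMap V t) := continuous_coinduced_rng
  have := (isCompact_univ (X := (Fin t → V) ⊕ Unit)).image h
  rwa [Set.image_univ, Set.range_eq_univ.mpr (qMap_surjective t)] at this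

/-- For a compact topological packing graph `G`, the set `I_t` of independent
sets of cardinality at most `t` is closed in the compact Hausdorff space `sub_t(V)`;
equivalently, the space `I_t` is compact. -/
theorem indepSpace_isClosed_and_compact
    {V : Type u} [TopologicalSpace V] [CompactSpace V] [T2Space V]
    (G : SimpleGraph V) (hG : IsPackingGraph G) (t : ℕ) :
    IsClosed {S : SubAtMost V t | IndepVerts G S.1} ∧ CompactSpace (IndepSpace G t) := by
  have hclosed : IsClosed {S : SubAtMost V t | IndepVerts G S.1} := by
    rw [← isOpen_compl_iff]
    rw [isOpen_coinduced]
    rw [isOpen_sum_iff]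
    constructor
    · have : (Sum.inl ⁻¹' (qMap V t ⁻¹' {S : SubAtMost V t | IndepVerts G S.1}ᶜ)) =
          ⋃ (i : Fin t) (j : Fin t), {f : Fin t → V | G.Adj (f i) (f j)} := by
        ext f
        simp only [Set.mem_preimage, Set.mem_compl_iff, Set.mem_setOf_eq, Set.mem_iUnion]
        constructor
        · intro h
          rw [IndepVerts] at h
          push_neg at h
          obtain ⟨x, hx, y, hy, hadj⟩ := h
          obtain ⟨i, rfl⟩ := hx
          obtain ⟨j, rfl⟩ := hy
          exact ⟨i, j, hadj⟩
        · rintro ⟨i, j, hadj⟩ h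
          exact h ⟨i, rfl⟩ ⟨j, rfl⟩ hadj
      rw [this]
      refine isOpen_iUnion fun i => isOpen_iUnion fun j => ?_
      have heq : {f : Fin t → V | G.Adj (f i) (f j)} =
          (fun f : Fin t → V => (f i, f j)) ⁻¹' {p : V × V | G.Adj p.1 p.2} := rfl
      rw [heq]
      exact IsOpen.preimage ((continuous_apply i).prodMk (continuous_apply j))
        (adj_isOpen_aux hG)
    · have : (Sum.inr ⁻¹' (qMap V t ⁻¹' {S : SubAtMost V t | IndepVerts G S.1}ᶜ)) = ∅ := by
        ext u
        simp only [Set.mem_preimage, Set.mem_compl_iff, Set.mem_setOf_eq, Set.mem_empty_iff_false,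
          iff_false, not_not]
        intro x hx
        exact absurd hx (Set.notMem_empty x)
      rw [this]; exact isOpen_empty
  refine ⟨hclosed, ?_⟩
  have hc : IsCompact {S : SubAtMost V t | IndepVerts G S.1} := hclosed.isCompact
  exact isCompact_iff_compactSpace.mp hc

end
end

section
/- Let G = (V, E) be a topological packing graph. For every t ∈ ℕ the cardinality map I_t → ℕ, S ↦ |S|, is continuous. In particular, for each t the set I_{=t} of independent sets of cardinality exactly t is both open and closed in I_t. -/
open MeasureTheory Set Topology
open scoped NNReal ENNReal

noncomputable section

universe u

variable {V : Type u}

theorem ncard_level_isOpen_aux {V : Type u} [TopologicalSpace V] [T2Space V]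
    (G : SimpleGraph V) (hG : IsPackingGraph G) (t n : ℕ) :
    IsOpen {S : IndepSpace G t | S.1.1.ncard = n} := by
  rw [isOpen_iff_forall_mem_open]
  rintro ⟨⟨S, hSfin, hSle⟩, hSind⟩ (hcard : S.ncard = n)
  -- enumerate S
  obtain ⟨g, hginj, hgrange⟩ : ∃ g : Fin n → V, Function.Injective g ∧ Set.range g = S := by
    obtain ⟨m, f, hf⟩ := hSfin.fin_embedding
    have hm : m = n := by
      rw [← hcard, ← hf, ← Set.image_univ, Set.ncard_image_of_injective _ f.injective,
        Set.ncard_univ]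
      simp
    subst hm
    exact ⟨f, f.injective, hf⟩
  -- disjoint opens
  obtain ⟨D, hD, hDdisj⟩ := (Set.finite_range g).t2_separation
  -- open cliques
  have hcl : ∀ i : Fin n, ∃ U : Set V, IsOpen U ∧ g i ∈ U ∧ G.IsClique U := by
    intro i
    obtain ⟨U, hU, hsub, hUcl⟩ := hG {g i} (Set.finite_singleton _) (by simp)
    exact ⟨U, hU, hsub rfl, hUcl⟩
  choose U hUopen hUmem hUcl using hcl
  set W : Fin n → Set V := fun i => U i ∩ D (g i) with hW
  have hWopen : ∀ i, IsOpen (W i) := fun i => (hUopen i).inter (hD (g i)).2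
  have hWmem : ∀ i, g i ∈ W i := fun i => ⟨hUmem i, (hD (g i)).1⟩
  have hWdisj : ∀ i j, i ≠ j → Disjoint (W i) (W j) := by
    intro i j hij
    have := hDdisj (Set.mem_range_self i) (Set.mem_range_self j) (fun h => hij (hginj h))
    exact Disjoint.mono inter_subset_right inter_subset_right this
  have hWcl : ∀ i, G.IsClique (W i) := fun i => (hUcl i).subset inter_subset_left
  -- the open neighborhood in SubAtMost
  set Wsub : Set (SubAtMost V t) :=
    {T | T.1 ⊆ ⋃ i, W i ∧ ∀ i, (T.1 ∩ W i).Nonempty} with hWsub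
  have hWsubOpen : IsOpen Wsub := by
    rw [isOpen_coinduced, isOpen_sum_iff]
    constructor
    · have : (Sum.inl ⁻¹' (qMap V t ⁻¹' Wsub)) =
          (⋂ k : Fin t, {f : Fin t → V | f k ∈ ⋃ i, W i}) ∩
          ⋂ i : Fin n, ⋃ k : Fin t, {f : Fin t → V | f k ∈ W i} := by
        ext f
        simp only [Set.mem_preimage, hWsub, qMap, Set.mem_setOf_eq, Set.mem_inter_iff,
          Set.mem_iInter, Set.mem_iUnion]
        constructor
        · rintro ⟨h1, h2⟩
          refine ⟨fun k => Set.mem_iUnion.mp (h1 ⟨k, rfl⟩), fun i => ?_⟩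
          obtain ⟨x, hx1, hx2⟩ := h2 i
          obtain ⟨k, rfl⟩ := hx1
          exact ⟨k, hx2⟩
        · rintro ⟨h1, h2⟩
          refine ⟨?_, fun i => ?_⟩
          · rintro x ⟨k, rfl⟩; exact Set.mem_iUnion.mpr (h1 k)
          · obtain ⟨k, hk⟩ := h2 i
            exact ⟨f k, ⟨k, rfl⟩, hk⟩
      rw [this]
      refine IsOpen.inter (isOpen_iInter_of_finite fun k => ?_)
        (isOpen_iInter_of_finite fun i => isOpen_iUnion fun k => ?_)
      · exact (isOpen_iUnion hWopen).preimage (continuous_apply k)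
      · exact (hWopen i).preimage (continuous_apply k)
    · rcases Set.eq_empty_or_nonempty (Sum.inr ⁻¹' (qMap V t ⁻¹' Wsub) : Set Unit) with h | h
      · rw [h]; exact isOpen_empty
      · have : (Sum.inr ⁻¹' (qMap V t ⁻¹' Wsub) : Set Unit) = Set.univ := by
          obtain ⟨u, hu⟩ := h
          ext x; exact ⟨fun _ => Set.mem_univ _, fun _ => by cases x; cases u; exact hu⟩
        rw [this]; exact isOpen_univ
  refine ⟨Subtype.val ⁻¹' Wsub, ?_, ?_, ?_⟩
  · -- containment: independent sets in Wsub have ncard = n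
    rintro ⟨⟨T, hTfin, hTle⟩, hTind⟩ ⟨hTsub, hTmeet⟩
    -- each T ∩ W i is a singleton
    have hsingle : ∀ i : Fin n, ∃ w : V, T ∩ W i = {w} := by
      intro i
      obtain ⟨w, hw⟩ := hTmeet i
      refine ⟨w, Set.eq_singleton_iff_unique_mem.mpr ⟨hw, ?_⟩⟩
      rintro x ⟨hxT, hxW⟩
      by_contra hxw
      exact hTind hxT hw.1 ((hWcl i) hxW hw.2 hxw)
    choose w hw using hsingle
    have hwinj : Function.Injective w := by
      intro i j hij
      by_contra hne
      have h1 : w i ∈ W i := by have := (hw i).symm ▸ (Set.mem_singleton (w i)); exact this.2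
      have h2 : w i ∈ W j := by
        rw [hij]
        have := (hw j).symm ▸ (Set.mem_singleton (w j)); exact this.2
      exact (hWdisj i j hne).ne_of_mem h1 h2 rfl
    have hT : T = Set.range w := by
      apply Set.Subset.antisymm
      · intro x hx
        obtain ⟨i, hxi⟩ : ∃ i, x ∈ W i := by
          simpa [Set.mem_iUnion] using hTsub hx
        have : x ∈ T ∩ W i := ⟨hx, hxi⟩
        rw [hw i] at this
        exact ⟨i, this.symm⟩
      · rintro x ⟨i, rfl⟩
        have : w i ∈ T ∩ W i := (hw i).symm ▸ Set.mem_singleton _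
        exact this.1
    show T.ncard = n
    rw [hT, ← Set.image_univ, Set.ncard_image_of_injective _ hwinj, Set.ncard_univ]
    simp
  · exact hWsubOpen.preimage continuous_subtype_val
  · refine ⟨?_, ?_⟩
    · intro x hx
      have hx' : x ∈ Set.range g := by rw [hgrange]; exact hx
      obtain ⟨i, rfl⟩ := hx'
      exact Set.mem_iUnion.mpr ⟨i, hWmem i⟩
    · intro i
      refine ⟨g i, ?_, hWmem i⟩
      show g i ∈ S
      rw [← hgrange]; exact ⟨i, rfl⟩

/-- For a topological packing graph `G`, the cardinality map
`I_t → ℕ`, `S ↦ |S|`, is continuous; in particular each set `I_{=s}` of independent sets of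
cardinality exactly `s` is both open and closed in `I_t`. -/
theorem cardinality_map_continuous
    {V : Type u} [TopologicalSpace V] [T2Space V]
    (G : SimpleGraph V) (hG : IsPackingGraph G) (t : ℕ) :
    Continuous (fun S : IndepSpace G t => S.1.1.ncard) ∧
      ∀ s : ℕ, IsOpen {S : IndepSpace G t | S.1.1.ncard = s} ∧
        IsClosed {S : IndepSpace G t | S.1.1.ncard = s} := by
  have hopen : ∀ n : ℕ, IsOpen {S : IndepSpace G t | S.1.1.ncard = n} :=
    fun n => ncard_level_isOpen_aux G hG t n
  have hcont : Continuous (fun S : IndepSpace G t => S.1.1.ncard) := by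
    rw [continuous_def]
    intro s _
    have : (fun S : IndepSpace G t => S.1.1.ncard) ⁻¹' s
        = ⋃ n ∈ s, {S : IndepSpace G t | S.1.1.ncard = n} := by
      ext S; simp
    rw [this]
    exact isOpen_biUnion fun n _ => hopen n
  refine ⟨hcont, fun s => ⟨hopen s, ?_⟩⟩
  exact isClosed_singleton.preimage hcont

end
end

section
/- Let G = (V, E) be a compact topological packing graph. Then for every t ∈ ℕ the operator A_t : C(I_t × I_t)_sym → C(I_{2t}) defined by A_tK(S) = Σ_{J,J' ∈ I_t : J ∪ J' = S} K(J, J') is surjective: for every g ∈ C(I_{2t}) there exists H ∈ C(I_t × I_t)_sym with A_tH = g. -/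
open MeasureTheory Set Topology
open scoped NNReal ENNReal

noncomputable section

universe u

variable {V : Type u}

section AtAux

open Set Topology

variable {V : Type u}

private lemma subAtMost_continuous_dom [TopologicalSpace V] {Z : Type*} [TopologicalSpace Z]
    {k : ℕ} {h : SubAtMost V k → Z} (hh : Continuous (h ∘ qMap V k)) : Continuous h :=
  (continuous_coinduced_dom (f := qMap V k)).mpr hh

private lemma subAtMost_isOpen [TopologicalSpace V] {k : ℕ} {s : Set (SubAtMost V k)}
    (hs : IsOpen (qMap V k ⁻¹' s)) : IsOpen s :=
  (isOpen_coinduced (f := qMap V k)).mpr hs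

private lemma qMap_continuous [TopologicalSpace V] (k : ℕ) : Continuous (qMap V k) :=
  continuous_coinduced_rng

private lemma qMap_inl_fst {k : ℕ} (v : Fin k → V) : (qMap V k (Sum.inl v)).1 = Set.range v := rfl

private lemma qMap_inr_fst {k : ℕ} (u : Unit) : (qMap V k (Sum.inr u)).1 = (∅ : Set V) := rfl

private lemma qMap_surjective_s4 (k : ℕ) : Function.Surjective (qMap V k) := by
  rintro ⟨S, hfin, hcard⟩
  rcases S.eq_empty_or_nonempty with rfl | hne
  · exact ⟨Sum.inr (), Subtype.ext rfl⟩
  · have hc : S.ncard = hfin.toFinset.card := Set.ncard_eq_toFinset_card S hfin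
    have hpos : 0 < hfin.toFinset.card := by
      rw [Finset.card_pos, Set.Finite.toFinset_nonempty]; exact hne
    set n := hfin.toFinset.card with hn
    have hnk : n ≤ k := by omega
    let e := hfin.toFinset.equivFin
    refine ⟨Sum.inl (fun j => (e.symm ⟨(j : ℕ) % n, Nat.mod_lt _ hpos⟩ : V)), Subtype.ext ?_⟩
    rw [qMap_inl_fst]
    apply Set.eq_of_subset_of_subset
    · rintro x ⟨j, rfl⟩
      exact hfin.mem_toFinset.mp (e.symm _).2
    · intro x hx
      have hxm : x ∈ hfin.toFinset := hfin.mem_toFinset.mpr hx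
      refine ⟨⟨(e ⟨x, hxm⟩ : ℕ), lt_of_lt_of_le (e ⟨x, hxm⟩).2 hnk⟩, ?_⟩
      have : ((e ⟨x, hxm⟩ : ℕ)) % n = (e ⟨x, hxm⟩ : ℕ) := Nat.mod_eq_of_lt (e ⟨x, hxm⟩).2
      simp only [this]
      have : e.symm ⟨(e ⟨x, hxm⟩ : ℕ), (e ⟨x, hxm⟩).2⟩ = ⟨x, hxm⟩ := by
        rw [show (⟨(e ⟨x, hxm⟩ : ℕ), (e ⟨x, hxm⟩).2⟩ : Fin n) = e ⟨x, hxm⟩ from Fin.ext rfl]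
        exact e.symm_apply_apply _
      rw [this]

instance [TopologicalSpace V] [CompactSpace V] (k : ℕ) : CompactSpace (SubAtMost V k) :=
  ⟨by
    rw [← Set.image_univ_of_surjective (qMap_surjective_s4 k)]
    exact (isCompact_univ).image (qMap_continuous k)⟩

/-- recursive max with 0 -/
private def nmax : ∀ {n : ℕ}, (Fin n → ℝ) → ℝ
  | 0, _ => 0
  | _ + 1, r => max (r 0) (nmax (r ∘ Fin.succ))

private lemma continuous_nmax : ∀ {n : ℕ}, Continuous (nmax (n := n))
  | 0 => continuous_const
  | n + 1 => (continuous_apply 0).max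
      (continuous_nmax.comp (continuous_pi fun i => continuous_apply i.succ))

private lemma nmax_eq : ∀ {n : ℕ} (r : Fin n → ℝ), nmax r = sSup (insert 0 (Set.range r))
  | 0, r => by
      rw [Set.range_eq_empty r, insert_empty_eq]
      exact (csSup_singleton 0).symm
  | n + 1, r => by
      have hr : Set.range r = insert (r 0) (Set.range (r ∘ Fin.succ)) := by
        rw [← Fin.cons_self_tail r, Fin.range_cons]
        rfl
      rw [nmax, nmax_eq (r ∘ Fin.succ), hr, Set.insert_comm,
        csSup_insert (((Set.finite_range _).insert 0).bddAbove) (Set.insert_nonempty _ _)]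

private lemma phi_coord_continuous [TopologicalSpace V] [CompactSpace V] [T2Space V] (k : ℕ)
    (f : C(V, ℝ)) : Continuous (fun A : SubAtMost V k => sSup (insert 0 (f '' A.1))) := by
  apply subAtMost_continuous_dom
  refine (continuous_sum_dom (X := Fin k → V) (Y := Unit) (Z := ℝ)).mpr ⟨?_, ?_⟩
  · have : (fun v : Fin k → V => sSup (insert 0 (f '' (qMap V k (Sum.inl v)).1)))
        = fun v => nmax (f ∘ v) := by
      funext v
      rw [nmax_eq]
      simp only [qMap_inl_fst, Set.range_comp]
    show Continuous fun v : Fin k → V => sSup (insert 0 (f '' (qMap V k (Sum.inl v)).1))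
    rw [this]
    exact continuous_nmax.comp
      (continuous_pi fun i => (map_continuous f).comp (continuous_apply i))
  · show Continuous fun _ : Unit => sSup (insert (0:ℝ) (f '' (∅ : Set V)))
    exact continuous_const

private lemma subAtMost_t2 [TopologicalSpace V] [CompactSpace V] [T2Space V] (k : ℕ) :
    T2Space (SubAtMost V k) := by
  have key : ∀ A B : SubAtMost V k, (∃ x, x ∈ A.1 ∧ x ∉ B.1) →
      (fun A : SubAtMost V k => fun f : C(V, ℝ) => sSup (insert 0 (f '' A.1))) A ≠
      (fun A : SubAtMost V k => fun f : C(V, ℝ) => sSup (insert 0 (f '' A.1))) B := by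
    rintro A B ⟨x, hxA, hxB⟩ hAB
    obtain ⟨f, hf0, hf1, -⟩ := exists_continuous_zero_one_of_isClosed
      (B.2.1.isClosed) (isClosed_singleton (x := x))
      (Set.disjoint_singleton_right.mpr hxB)
    have h1 : (1 : ℝ) ≤ sSup (insert 0 (f '' A.1)) := by
      have hmem : (1 : ℝ) ∈ insert 0 (f '' A.1) := by
        refine Set.mem_insert_of_mem _ ⟨x, hxA, ?_⟩
        simpa using hf1 rfl
      exact le_csSup (((A.2.1.image f).insert 0).bddAbove) hmem
    have h0 : sSup (insert (0:ℝ) (f '' B.1)) = 0 := by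
      have : insert (0:ℝ) (f '' B.1) = {0} := by
        apply Set.eq_of_subset_of_subset
        · rintro y (rfl | ⟨z, hz, rfl⟩)
          · rfl
          · simpa using hf0 hz
        · rintro y rfl; exact Set.mem_insert _ _
      rw [this]; exact csSup_singleton 0
    have := congrFun hAB f
    simp only at this
    rw [this, h0] at h1
    norm_num at h1
  refine T2Space.of_injective_continuous (f := fun A : SubAtMost V k =>
    fun f : C(V, ℝ) => sSup (insert 0 (f '' A.1))) ?_ ?_
  · intro A B hAB
    by_contra hne
    have hsets : A.1 ≠ B.1 := fun h => hne (Subtype.ext h)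
    rcases (Set.not_subset.mp (fun h => hsets (Set.eq_of_subset_of_subset h (by
      by_contra hBA
      obtain ⟨x, hxB, hxA⟩ := Set.not_subset.mp hBA
      exact key B A ⟨x, hxB, hxA⟩ hAB.symm)))) with ⟨x, hxA, hxB⟩
    exact key A B ⟨x, hxA, hxB⟩ hAB
  · exact continuous_pi fun f => phi_coord_continuous k f

private def fappend {k : ℕ} (f g : Fin k → V) : Fin (2 * k) → V := fun i =>
  if h : (i : ℕ) < k then f ⟨i, h⟩ else g ⟨(i : ℕ) - k, by have := i.isLt; omega⟩

private lemma range_fappend {k : ℕ} (f g : Fin k → V) :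
    Set.range (fappend f g) = Set.range f ∪ Set.range g := by
  ext x
  simp only [Set.mem_range, Set.mem_union]
  constructor
  · rintro ⟨i, rfl⟩
    unfold fappend
    split_ifs with h
    · exact Or.inl ⟨_, rfl⟩
    · exact Or.inr ⟨_, rfl⟩
  · rintro (⟨j, rfl⟩ | ⟨j, rfl⟩)
    · refine ⟨⟨(j : ℕ), by have := j.isLt; omega⟩, ?_⟩
      simp [fappend, j.isLt]
    · refine ⟨⟨k + (j : ℕ), by have := j.isLt; omega⟩, ?_⟩
      have hnk : ¬ (k + (j : ℕ) < k) := by omega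
      simp only [fappend, dif_neg hnk]
      congr 1
      ext
      simp

private lemma continuous_fappend {k : ℕ} [TopologicalSpace V] :
    Continuous (fun p : (Fin k → V) × (Fin k → V) => fappend p.1 p.2) := by
  refine continuous_pi fun i => ?_
  unfold fappend
  by_cases h : (i : ℕ) < k
  · simp only [dif_pos h]
    exact (continuous_apply _).comp continuous_fst
  · simp only [dif_neg h]
    exact (continuous_apply _).comp continuous_snd

private def unionMap (k : ℕ) (A B : SubAtMost V k) : SubAtMost V (2 * k) :=
  ⟨A.1 ∪ B.1, (A.2.1.union B.2.1), by
    calc (A.1 ∪ B.1).ncard ≤ A.1.ncard + B.1.ncard := Set.ncard_union_le _ _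
    _ ≤ k + k := add_le_add A.2.2 B.2.2
    _ = 2 * k := (two_mul k).symm⟩

@[simp] private lemma unionMap_fst {k : ℕ} (A B : SubAtMost V k) :
    (unionMap k A B).1 = A.1 ∪ B.1 := rfl

private def pMap (k : ℕ) :
    ((Fin k → V) ⊕ Unit) × ((Fin k → V) ⊕ Unit) → (Fin (2 * k) → V) ⊕ Unit
  | (Sum.inl f, Sum.inl g) => Sum.inl (fappend f g)
  | (Sum.inl f, Sum.inr _) => Sum.inl (fappend f f)
  | (Sum.inr _, Sum.inl g) => Sum.inl (fappend g g)
  | (Sum.inr _, Sum.inr _) => Sum.inr ()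

private lemma continuous_pMap (k : ℕ) [TopologicalSpace V] : Continuous (pMap (V := V) k) := by
  have h1 : Continuous (fun q : (Fin k → V) × (Fin k → V) =>
      (Sum.inl (fappend q.1 q.2) : (Fin (2 * k) → V) ⊕ Unit)) :=
    continuous_inl.comp continuous_fappend
  have h2 : Continuous (fun q : (Fin k → V) × Unit =>
      (Sum.inl (fappend q.1 q.1) : (Fin (2 * k) → V) ⊕ Unit)) :=
    continuous_inl.comp (continuous_fappend.comp (continuous_fst.prodMk continuous_fst))
  have h3 : Continuous (fun q : Unit × (Fin k → V) =>
      (Sum.inl (fappend q.2 q.2) : (Fin (2 * k) → V) ⊕ Unit)) :=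
    continuous_inl.comp (continuous_fappend.comp (continuous_snd.prodMk continuous_snd))
  have h4 : Continuous (fun _ : Unit × Unit => (Sum.inr () : (Fin (2 * k) → V) ⊕ Unit)) :=
    continuous_const
  have hF1 : Continuous (Sum.elim
      (fun q : (Fin k → V) × (Fin k → V) => (Sum.inl (fappend q.1 q.2) : (Fin (2*k) → V) ⊕ Unit))
      (fun q : (Fin k → V) × Unit => (Sum.inl (fappend q.1 q.1) : (Fin (2*k) → V) ⊕ Unit)) ∘
      (Homeomorph.prodSumDistrib (X := Fin k → V) (Y := Fin k → V) (Z := Unit))) :=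
    (h1.sumElim h2).comp (Homeomorph.continuous _)
  have hF2 : Continuous (Sum.elim
      (fun q : Unit × (Fin k → V) => (Sum.inl (fappend q.2 q.2) : (Fin (2*k) → V) ⊕ Unit))
      (fun _ : Unit × Unit => (Sum.inr () : (Fin (2*k) → V) ⊕ Unit)) ∘
      (Homeomorph.prodSumDistrib (X := Unit) (Y := Fin k → V) (Z := Unit))) :=
    (h3.sumElim h4).comp (Homeomorph.continuous _)
  have : pMap (V := V) k = (Sum.elim
      (Sum.elim
        (fun q : (Fin k → V) × (Fin k → V) => (Sum.inl (fappend q.1 q.2) : (Fin (2*k) → V) ⊕ Unit))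
        (fun q : (Fin k → V) × Unit => (Sum.inl (fappend q.1 q.1) : (Fin (2*k) → V) ⊕ Unit)) ∘
        (Homeomorph.prodSumDistrib (X := Fin k → V) (Y := Fin k → V) (Z := Unit)))
      (Sum.elim
        (fun q : Unit × (Fin k → V) => (Sum.inl (fappend q.2 q.2) : (Fin (2*k) → V) ⊕ Unit))
        (fun _ : Unit × Unit => (Sum.inr () : (Fin (2*k) → V) ⊕ Unit)) ∘
        (Homeomorph.prodSumDistrib (X := Unit) (Y := Fin k → V) (Z := Unit)))) ∘
      (Homeomorph.sumProdDistrib (X := Fin k → V) (Y := Unit) (Z := (Fin k → V) ⊕ Unit)) := by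
    funext p
    rcases p with ⟨a | a, b | b⟩ <;> rfl
  rw [this]
  exact (hF1.sumElim hF2).comp (Homeomorph.continuous _)

private lemma qMap_pMap (k : ℕ) (x y : (Fin k → V) ⊕ Unit) :
    qMap V (2 * k) (pMap k (x, y)) = unionMap k (qMap V k x) (qMap V k y) := by
  rcases x with f | u <;> rcases y with g | u' <;> apply Subtype.ext <;>
    simp [qMap, pMap, unionMap, range_fappend]

private lemma continuous_unionMap (k : ℕ) [TopologicalSpace V] [CompactSpace V] [T2Space V] :
    Continuous (fun p : SubAtMost V k × SubAtMost V k => unionMap k p.1 p.2) := by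
  have : T2Space (SubAtMost V k) := subAtMost_t2 k
  have hq : IsProperMap (qMap V k) := (qMap_continuous k).isProperMap
  have hqq : IsQuotientMap (Prod.map (qMap V k) (qMap V k)) :=
    ((hq.prodMap hq).isClosedMap).isQuotientMap (hq.prodMap hq).continuous
      ((qMap_surjective_s4 k).prodMap (qMap_surjective_s4 k))
  rw [hqq.continuous_iff]
  have : (fun p : SubAtMost V k × SubAtMost V k => unionMap k p.1 p.2) ∘
      Prod.map (qMap V k) (qMap V k) = (qMap V (2 * k)) ∘ (fun xy => pMap k xy) := by
    funext xy
    exact (qMap_pMap k xy.1 xy.2).symm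
  rw [this]
  exact (qMap_continuous (2 * k)).comp (continuous_pMap k)

private lemma adj_isOpen [TopologicalSpace V] [T2Space V] {G : SimpleGraph V}
    (hG : IsPackingGraph G) : IsOpen {p : V × V | G.Adj p.1 p.2} := by
  rw [isOpen_iff_mem_nhds]
  rintro ⟨x, y⟩ hxy
  simp only [Set.mem_setOf_eq] at hxy
  have hclique : G.IsClique {x, y} := by
    intro a ha b hb hne
    rcases ha with rfl | ha <;> rcases hb with rfl | hb
    · exact absurd rfl hne
    · rw [Set.mem_singleton_iff] at hb; subst hb; exact hxy
    · rw [Set.mem_singleton_iff] at ha; subst ha; exact hxy.symm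
    · rw [Set.mem_singleton_iff] at ha hb; subst ha; subst hb; exact absurd rfl hne
  obtain ⟨U, hUo, hsub, hUc⟩ := hG {x, y} (Set.toFinite _) hclique
  obtain ⟨Ux, Uy, hUxo, hUyo, hxUx, hyUy, hdisj⟩ := t2_separation (G.ne_of_adj hxy)
  have hopen : IsOpen ((U ∩ Ux) ×ˢ (U ∩ Uy)) := (hUo.inter hUxo).prod (hUo.inter hUyo)
  refine Filter.mem_of_superset (hopen.mem_nhds ⟨⟨hsub (Set.mem_insert _ _), hxUx⟩,
    ⟨hsub (Set.mem_insert_of_mem _ rfl), hyUy⟩⟩) ?_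
  rintro ⟨a, b⟩ ⟨⟨haU, haUx⟩, hbU, hbUy⟩
  exact hUc haU hbU (fun h => Set.disjoint_left.mp hdisj haUx (h ▸ hbUy))

private lemma isClosed_indeps (k : ℕ) [TopologicalSpace V] [T2Space V] {G : SimpleGraph V}
    (hG : IsPackingGraph G) : IsClosed {A : SubAtMost V k | IndepVerts G A.1} := by
  rw [← isOpen_compl_iff]
  apply subAtMost_isOpen
  rw [isOpen_sum_iff]
  constructor
  · have : Sum.inl ⁻¹' (qMap V k ⁻¹' {A : SubAtMost V k | IndepVerts G A.1}ᶜ) =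
        ⋃ i, ⋃ j, (fun v : Fin k → V => (v i, v j)) ⁻¹' {p : V × V | G.Adj p.1 p.2} := by
      ext v
      simp only [Set.mem_preimage, Set.mem_compl_iff, Set.mem_setOf_eq, Set.mem_iUnion,
        qMap_inl_fst]
      constructor
      · intro h
        show ∃ i j, G.Adj (v i) (v j)
        by_contra hc
        push_neg at hc
        exact h (by rintro x ⟨i, rfl⟩ y ⟨j, rfl⟩; exact hc i j)
      · rintro ⟨i, j, hadj⟩ hind
        exact hind ⟨i, rfl⟩ ⟨j, rfl⟩ hadj
    rw [this]
    exact isOpen_iUnion fun i => isOpen_iUnion fun j =>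
      (adj_isOpen hG).preimage ((continuous_apply i).prodMk (continuous_apply j))
  · have : Sum.inr ⁻¹' (qMap V k ⁻¹' {A : SubAtMost V k | IndepVerts G A.1}ᶜ) = ∅ := by
      ext u
      simp only [Set.mem_preimage, Set.mem_compl_iff, Set.mem_setOf_eq, Set.mem_empty_iff_false,
        iff_false, not_not, qMap_inr_fst]
      intro x hx
      exact absurd hx (Set.notMem_empty x)
    rw [this]
    exact isOpen_empty

private lemma exists_disjoint_opens [TopologicalSpace V] [T2Space V] (s : Finset V) :
    ∃ W : V → Set V, (∀ x, IsOpen (W x)) ∧ (∀ x, x ∈ W x) ∧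
      ∀ x ∈ s, ∀ y ∈ s, x ≠ y → Disjoint (W x) (W y) := by
  classical
  induction s using Finset.induction_on with
  | empty => exact ⟨fun _ => Set.univ, fun _ => isOpen_univ, fun _ => Set.mem_univ _, by simp⟩
  | @insert a s ha ih =>
    obtain ⟨W, hWo, hWm, hWd⟩ := ih
    have H : ∀ y : V, ∃ uv : Set V × Set V, IsOpen uv.1 ∧ IsOpen uv.2 ∧ a ∈ uv.1 ∧
        (y ∈ s → y ∈ uv.2) ∧ Disjoint uv.1 uv.2 := by
      intro y
      by_cases hy : y ∈ s
      · have hay : a ≠ y := fun h => ha (h ▸ hy)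
        obtain ⟨u, v, hu, hv, hau, hyv, hd⟩ := t2_separation hay
        exact ⟨(u, v), hu, hv, hau, fun _ => hyv, hd⟩
      · exact ⟨(Set.univ, ∅), isOpen_univ, isOpen_empty, Set.mem_univ _, fun h => absurd h hy,
          disjoint_bot_right⟩
    choose uv hu hv hau hyv hd using H
    refine ⟨fun z => if z = a then (⋂ y ∈ s, (uv y).1) ∩ W a
      else if z ∈ s then (uv z).2 ∩ W z else W z, ?_, ?_, ?_⟩
    · intro z
      by_cases h1 : z = a
      · simp only [if_pos h1]
        exact ((isOpen_biInter_finset fun y _ => hu y).inter (hWo a))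
      · by_cases h2 : z ∈ s <;> simp only [if_neg h1, if_pos, if_neg, h2, if_true, if_false]
        · exact (hv z).inter (hWo z)
        · exact hWo z
    · intro z
      by_cases h1 : z = a
      · subst h1
        simp only [if_pos rfl]
        exact ⟨Set.mem_biInter fun y _ => hau y, hWm z⟩
      · by_cases h2 : z ∈ s <;> simp only [if_neg h1, h2, if_true, if_false]
        · exact ⟨hyv z h2, hWm z⟩
        · exact hWm z
    · intro x hx y hy hxy
      rcases Finset.mem_insert.mp hx with rfl | hxs
      · rcases Finset.mem_insert.mp hy with rfl | hys
        · exact absurd rfl hxy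
        · have hyna : y ≠ x := fun h => ha (h ▸ hys)
          simp only [if_pos rfl, if_neg hyna, if_pos hys]
          refine Set.disjoint_of_subset ?_ ?_ (hd y)
          · exact (Set.inter_subset_left).trans (Set.biInter_subset_of_mem hys)
          · exact Set.inter_subset_left
      · rcases Finset.mem_insert.mp hy with rfl | hys
        · have hxna : x ≠ y := fun h => ha (h ▸ hxs)
          simp only [if_pos rfl, if_neg hxna, if_pos hxs]
          refine Set.disjoint_of_subset ?_ ?_ (hd x).symm
          · exact Set.inter_subset_left
          · exact (Set.inter_subset_left).trans (Set.biInter_subset_of_mem hxs)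
        · have hxna : x ≠ a := fun h => ha (h ▸ hxs)
          have hyna : y ≠ a := fun h => ha (h ▸ hys)
          simp only [if_neg hxna, if_neg hyna, if_pos hxs, if_pos hys]
          exact Set.disjoint_of_subset (Set.inter_subset_right) (Set.inter_subset_right)
            (hWd x hxs y hys hxy)

private lemma exists_nice_nbhd [TopologicalSpace V] [T2Space V] {G : SimpleGraph V}
    (hG : IsPackingGraph G) {k : ℕ} (S : SubAtMost V k) (hS : IndepVerts G S.1) :
    ∃ O : Set (SubAtMost V k), IsOpen O ∧ S ∈ O ∧
      ∀ A ∈ O, IndepVerts G A.1 → A.1.ncard = S.1.ncard := by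
  classical
  -- clique neighborhoods
  have hcl : ∀ x : V, ∃ U : Set V, IsOpen U ∧ x ∈ U ∧ G.IsClique U := by
    intro x
    obtain ⟨U, hUo, hsub, hUc⟩ := hG {x} (Set.finite_singleton x) (by
      intro a ha b hb hne
      rw [Set.mem_singleton_iff] at ha hb
      exact absurd (ha.trans hb.symm) hne)
    exact ⟨U, hUo, hsub rfl, hUc⟩
  choose Uc hUco hUcx hUcc using hcl
  set s : Finset V := S.2.1.toFinset with hs
  obtain ⟨W0, hW0o, hW0m, hW0d⟩ := exists_disjoint_opens (V := V) s
  set W : V → Set V := fun x => W0 x ∩ Uc x with hW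
  have hWo : ∀ x, IsOpen (W x) := fun x => (hW0o x).inter (hUco x)
  have hWm : ∀ x, x ∈ W x := fun x => ⟨hW0m x, hUcx x⟩
  have hWd : ∀ x ∈ s, ∀ y ∈ s, x ≠ y → Disjoint (W x) (W y) := fun x hx y hy hxy =>
    Set.disjoint_of_subset Set.inter_subset_left Set.inter_subset_left (hW0d x hx y hy hxy)
  set bigU : Set V := ⋃ x ∈ s, W x with hbigU
  have hbigUo : IsOpen bigU := isOpen_biUnion fun x _ => hWo x
  refine ⟨{A : SubAtMost V k | A.1 ⊆ bigU ∧ ∀ x ∈ s, (A.1 ∩ W x).Nonempty}, ?_, ?_, ?_⟩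
  · apply subAtMost_isOpen
    rw [isOpen_sum_iff]
    constructor
    · have : Sum.inl ⁻¹' (qMap V k ⁻¹' {A : SubAtMost V k | A.1 ⊆ bigU ∧
          ∀ x ∈ s, (A.1 ∩ W x).Nonempty}) =
          (⋂ j, (fun v : Fin k → V => v j) ⁻¹' bigU) ∩
          (⋂ x ∈ s, ⋃ j, (fun v : Fin k → V => v j) ⁻¹' (W x)) := by
        ext v
        simp only [Set.mem_preimage, Set.mem_setOf_eq, qMap_inl_fst, Set.mem_inter_iff,
          Set.mem_iInter, Set.mem_iUnion]
        constructor
        · rintro ⟨h1, h2⟩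
          refine ⟨fun j => h1 ⟨j, rfl⟩, fun x hx => ?_⟩
          obtain ⟨y, ⟨j, rfl⟩, hyW⟩ := h2 x hx
          exact ⟨j, hyW⟩
        · rintro ⟨h1, h2⟩
          refine ⟨by rintro y ⟨j, rfl⟩; exact h1 j, fun x hx => ?_⟩
          obtain ⟨j, hj⟩ := h2 x hx
          exact ⟨v j, ⟨j, rfl⟩, hj⟩
      rw [this]
      exact (isOpen_iInter_of_finite fun j => hbigUo.preimage (continuous_apply j)).inter
        (isOpen_biInter_finset fun x _ => isOpen_iUnion fun j =>
          (hWo x).preimage (continuous_apply j))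
    · by_cases hse : s = ∅
      · have : Sum.inr ⁻¹' (qMap V k ⁻¹' {A : SubAtMost V k | A.1 ⊆ bigU ∧
            ∀ x ∈ s, (A.1 ∩ W x).Nonempty}) = Set.univ := by
          ext u
          simp only [Set.mem_preimage, Set.mem_setOf_eq, qMap_inr_fst, Set.mem_univ, iff_true,
            hse]
          exact ⟨Set.empty_subset _, by simp⟩
        rw [this]; exact isOpen_univ
      · obtain ⟨x, hx⟩ := Finset.nonempty_iff_ne_empty.mpr hse
        have : Sum.inr ⁻¹' (qMap V k ⁻¹' {A : SubAtMost V k | A.1 ⊆ bigU ∧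
            ∀ x ∈ s, (A.1 ∩ W x).Nonempty}) = ∅ := by
          ext u
          simp only [Set.mem_preimage, Set.mem_setOf_eq, qMap_inr_fst,
            Set.mem_empty_iff_false, iff_false, not_and]
          intro _ h
          obtain ⟨y, hy, -⟩ := h x hx
          exact absurd hy (Set.notMem_empty y)
        rw [this]; exact isOpen_empty
  · constructor
    · intro y hy
      have hys : y ∈ s := S.2.1.mem_toFinset.mpr hy
      exact Set.mem_biUnion hys (hWm y)
    · intro x hx
      exact ⟨x, S.2.1.mem_toFinset.mp hx, hWm x⟩
  · rintro A ⟨hA1, hA2⟩ hAind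
    have hcard_s : S.1.ncard = s.card := Set.ncard_eq_toFinset_card S.1 S.2.1
    rw [hcard_s]
    apply le_antisymm
    · -- A.1.ncard ≤ s.card : map each point of A to the unique W x containing it
      have : A.1.ncard ≤ (↑s : Set V).ncard := by
        refine Set.ncard_le_ncard_of_injOn
          (fun y => if h : ∃ x ∈ s, y ∈ W x then h.choose else y) ?_ ?_ (s.finite_toSet)
        · intro y hy
          have hyU : y ∈ bigU := hA1 hy
          rw [hbigU] at hyU
          simp only [Set.mem_iUnion] at hyU
          obtain ⟨x, hx, hyW⟩ := hyU
          have hex : ∃ x ∈ s, y ∈ W x := ⟨x, hx, hyW⟩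
          simp only [dif_pos hex]
          exact hex.choose_spec.1
        · intro y hy y' hy' heq
          by_contra hne
          have hexy : ∃ x ∈ s, y ∈ W x := by
            have hyU := hA1 hy
            rw [hbigU] at hyU
            simp only [Set.mem_iUnion] at hyU
            obtain ⟨x, hx, hyW⟩ := hyU
            exact ⟨x, hx, hyW⟩
          have hexy' : ∃ x ∈ s, y' ∈ W x := by
            have hyU := hA1 hy'
            rw [hbigU] at hyU
            simp only [Set.mem_iUnion] at hyU
            obtain ⟨x, hx, hyW⟩ := hyU
            exact ⟨x, hx, hyW⟩
          simp only [dif_pos hexy, dif_pos hexy'] at heq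
          have h1 : y ∈ W hexy.choose := hexy.choose_spec.2
          have h2 : y' ∈ W hexy.choose := heq ▸ hexy'.choose_spec.2
          have hadj : G.Adj y y' := hUcc hexy.choose h1.2 h2.2 hne
          exact hAind hy hy' hadj
      simpa [Set.ncard_coe_finset] using this
    · -- s.card ≤ A.1.ncard : each W x contains a point of A
      have : (↑s : Set V).ncard ≤ A.1.ncard := by
        refine Set.ncard_le_ncard_of_injOn
          (fun x => if h : (A.1 ∩ W x).Nonempty then h.choose else x) ?_ ?_ A.2.1
        · intro x hx
          have hex := hA2 x hx
          simp only [dif_pos hex]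
          exact hex.choose_spec.1
        · intro x hx x' hx' heq
          by_contra hne
          have hex := hA2 x (by simpa using hx)
          have hex' := hA2 x' (by simpa using hx')
          simp only [dif_pos hex, dif_pos hex'] at heq
          have h1 : hex.choose ∈ W x := hex.choose_spec.2
          have h2 : hex.choose ∈ W x' := heq ▸ hex'.choose_spec.2
          exact Set.disjoint_left.mp (hWd x (by simpa using hx) x' (by simpa using hx') hne)
            h1 h2
      simpa [Set.ncard_coe_finset] using this

private lemma indep_mono {G : SimpleGraph V} {A B : Set V} (h : IndepVerts G B) (hAB : A ⊆ B) :
    IndepVerts G A := fun _ hx _ hy => h (hAB hx) (hAB hy)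

/-- transport of subsets along an equivalence of base sets -/
private def setIM {S₁ S₂ : Set V} (e : ↥S₁ ≃ ↥S₂) (A : Set V) : Set V :=
  Subtype.val '' (⇑e '' (Subtype.val ⁻¹' A))

private lemma setIM_subset {S₁ S₂ : Set V} (e : ↥S₁ ≃ ↥S₂) (A : Set V) : setIM e A ⊆ S₂ := by
  rintro x ⟨y, -, rfl⟩
  exact y.2

private lemma setIM_union {S₁ S₂ : Set V} (e : ↥S₁ ≃ ↥S₂) (A B : Set V) :
    setIM e (A ∪ B) = setIM e A ∪ setIM e B := by
  unfold setIM
  rw [Set.preimage_union, Set.image_union, Set.image_union]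

private lemma setIM_inv {S₁ S₂ : Set V} (e : ↥S₁ ≃ ↥S₂) {A : Set V} (hA : A ⊆ S₁) :
    setIM e.symm (setIM e A) = A := by
  unfold setIM
  rw [Set.preimage_image_eq _ Subtype.val_injective, Equiv.symm_image_image,
    Set.image_preimage_eq_of_subset]
  rwa [Subtype.range_coe]

private lemma setIM_top {S₁ S₂ : Set V} (e : ↥S₁ ≃ ↥S₂) : setIM e S₁ = S₂ := by
  unfold setIM
  have h1 : (Subtype.val ⁻¹' S₁ : Set ↥S₁) = Set.univ := by
    ext x; simpa using x.2
  rw [h1, Set.image_univ_of_surjective e.surjective, Set.image_univ, Subtype.range_coe]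

private lemma setIM_ncard {S₁ S₂ : Set V} (e : ↥S₁ ≃ ↥S₂) (A : Set V) :
    (setIM e A).ncard = (A ∩ S₁).ncard := by
  unfold setIM
  rw [← Set.image_comp, Set.ncard_image_of_injective _
    (Subtype.val_injective.comp e.injective)]
  have : Subtype.val '' (Subtype.val ⁻¹' A : Set ↥S₁) = A ∩ S₁ := by
    rw [Set.image_preimage_eq_inter_range, Subtype.range_coe]
  rw [← Set.ncard_image_of_injective _ (Subtype.val_injective (p := (· ∈ S₁))), this]

private lemma setIM_finite {S₁ S₂ : Set V} (e : ↥S₁ ≃ ↥S₂) (hS₁ : S₁.Finite) (A : Set V) :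
    (setIM e A).Finite := by
  have := hS₁.to_subtype
  exact ((Set.toFinite _).image _).image _

section PairCount

variable [TopologicalSpace V] {G : SimpleGraph V}

private def pairSet (G : SimpleGraph V) [TopologicalSpace V] (t : ℕ)
    (S : IndepSpace G (2 * t)) : Set (IndepSpace G t × IndepSpace G t) :=
  {p | p.1.1.1 ∪ p.2.1.1 = S.1.1}

private lemma pairSet_finite (t : ℕ) (S : IndepSpace G (2 * t)) : (pairSet G t S).Finite := by
  have hfin : ({T | T ⊆ S.1.1} ×ˢ {T | T ⊆ S.1.1} : Set (Set V × Set V)).Finite :=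
    (S.1.2.1.finite_subsets).prod (S.1.2.1.finite_subsets)
  apply Set.Finite.of_finite_image (f := fun p => (p.1.1.1, p.2.1.1))
  · apply hfin.subset
    rintro ⟨a, b⟩ ⟨p, hp, heq⟩
    have hp' : p.1.1.1 ∪ p.2.1.1 = S.1.1 := hp
    rw [← heq]
    exact ⟨(Set.subset_union_left).trans hp'.le, (Set.subset_union_right).trans hp'.le⟩
  · rintro p - q - h
    have h1 : p.1.1.1 = q.1.1.1 := congrArg Prod.fst h
    have h2 : p.2.1.1 = q.2.1.1 := congrArg Prod.snd h
    exact Prod.ext (Subtype.ext (Subtype.ext h1)) (Subtype.ext (Subtype.ext h2))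

private def NNc (G : SimpleGraph V) [TopologicalSpace V] (t : ℕ) (S : IndepSpace G (2 * t)) :
    ℕ := (pairSet G t S).ncard

private lemma NNc_pos (t : ℕ) (S : IndepSpace G (2 * t)) : 0 < NNc G t S := by
  rw [NNc, Set.ncard_pos (pairSet_finite t S)]
  have hn2t : S.1.1.ncard ≤ 2 * t := S.1.2.2
  obtain ⟨A, hAsub, hAcard⟩ := Set.exists_subset_card_eq
    (show min t S.1.1.ncard ≤ S.1.1.ncard from min_le_right _ _)
  have hAfin : A.Finite := S.1.2.1.subset hAsub
  have hBfin : (S.1.1 \ A).Finite := S.1.2.1.subset Set.diff_subset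
  have hBcard : (S.1.1 \ A).ncard = S.1.1.ncard - min t S.1.1.ncard := by
    rw [Set.ncard_diff hAsub hAfin, hAcard]
  have hAle : A.ncard ≤ t := by rw [hAcard]; exact min_le_left _ _
  have hBle : (S.1.1 \ A).ncard ≤ t := by
    rw [hBcard]
    rcases le_total t S.1.1.ncard with h | h
    · rw [min_eq_left h]; omega
    · rw [min_eq_right h]; omega
  refine ⟨(⟨⟨A, hAfin, hAle⟩, indep_mono S.2 hAsub⟩,
    ⟨⟨S.1.1 \ A, hBfin, hBle⟩, indep_mono S.2 Set.diff_subset⟩), ?_⟩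
  show A ∪ (S.1.1 \ A) = S.1.1
  exact Set.union_diff_cancel hAsub

private def mkIM {t : ℕ} {T₁ T₂ : Set V} (e' : ↥T₁ ≃ ↥T₂) (hT₁ : T₁.Finite)
    (hT₂ : IndepVerts G T₂) (J : IndepSpace G t) : IndepSpace G t :=
  ⟨⟨setIM e' J.1.1, setIM_finite e' hT₁ _, by
      calc (setIM e' J.1.1).ncard = (J.1.1 ∩ T₁).ncard := setIM_ncard e' _
      _ ≤ J.1.1.ncard := Set.ncard_le_ncard Set.inter_subset_left J.1.2.1
      _ ≤ t := J.1.2.2⟩, indep_mono hT₂ (setIM_subset e' _)⟩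

private lemma NNc_eq_of_ncard_eq (t : ℕ) (S S' : IndepSpace G (2 * t))
    (h : S.1.1.ncard = S'.1.1.ncard) : NNc G t S = NNc G t S' := by
  classical
  have hcards : S.1.2.1.toFinset.card = S'.1.2.1.toFinset.card := by
    rw [← Set.ncard_eq_toFinset_card _ S.1.2.1, ← Set.ncard_eq_toFinset_card _ S'.1.2.1, h]
  let e : ↥S.1.1 ≃ ↥S'.1.1 :=
    ((Equiv.subtypeEquivRight fun x => (S.1.2.1.mem_toFinset).symm).trans
      (S.1.2.1.toFinset.equivFin)).trans <|
      ((finCongr hcards).trans (S'.1.2.1.toFinset.equivFin).symm).trans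
      (Equiv.subtypeEquivRight fun x => S'.1.2.1.mem_toFinset)
  set Phi : IndepSpace G t × IndepSpace G t → IndepSpace G t × IndepSpace G t :=
    fun p => (mkIM e S.1.2.1 S'.2 p.1, mkIM e S.1.2.1 S'.2 p.2) with hPhi
  set Phi' : IndepSpace G t × IndepSpace G t → IndepSpace G t × IndepSpace G t :=
    fun p => (mkIM e.symm S'.1.2.1 S.2 p.1, mkIM e.symm S'.1.2.1 S.2 p.2) with hPhi'
  have hPhiFst : ∀ p, (Phi p).1.1.1 = setIM e p.1.1.1 := fun p => rfl
  have hPhiSnd : ∀ p, (Phi p).2.1.1 = setIM e p.2.1.1 := fun p => rfl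
  have hinj : Set.InjOn Phi (pairSet G t S) := by
    intro p hp q hq hpq
    have hp' : p.1.1.1 ∪ p.2.1.1 = S.1.1 := hp
    have hq' : q.1.1.1 ∪ q.2.1.1 = S.1.1 := hq
    have h1 : setIM e p.1.1.1 = setIM e q.1.1.1 := by
      rw [← hPhiFst, ← hPhiFst, hpq]
    have h2 : setIM e p.2.1.1 = setIM e q.2.1.1 := by
      rw [← hPhiSnd, ← hPhiSnd, hpq]
    have e1 : p.1.1.1 = q.1.1.1 := by
      rw [← setIM_inv e (show p.1.1.1 ⊆ S.1.1 from (Set.subset_union_left).trans hp'.le), h1,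
        setIM_inv e (show q.1.1.1 ⊆ S.1.1 from (Set.subset_union_left).trans hq'.le)]
    have e2 : p.2.1.1 = q.2.1.1 := by
      rw [← setIM_inv e (show p.2.1.1 ⊆ S.1.1 from (Set.subset_union_right).trans hp'.le), h2,
        setIM_inv e (show q.2.1.1 ⊆ S.1.1 from (Set.subset_union_right).trans hq'.le)]
    exact Prod.ext (Subtype.ext (Subtype.ext e1)) (Subtype.ext (Subtype.ext e2))
  have himg : Phi '' (pairSet G t S) = pairSet G t S' := by
    apply Set.eq_of_subset_of_subset
    · rintro q ⟨p, hp, rfl⟩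
      have hp' : p.1.1.1 ∪ p.2.1.1 = S.1.1 := hp
      show (Phi p).1.1.1 ∪ (Phi p).2.1.1 = S'.1.1
      rw [hPhiFst, hPhiSnd, ← setIM_union, hp', setIM_top]
    · intro q hq
      have hq' : q.1.1.1 ∪ q.2.1.1 = S'.1.1 := hq
      have hq1 : q.1.1.1 ⊆ S'.1.1 := (Set.subset_union_left).trans hq'.le
      have hq2 : q.2.1.1 ⊆ S'.1.1 := (Set.subset_union_right).trans hq'.le
      refine ⟨Phi' q, ?_, ?_⟩
      · show setIM e.symm q.1.1.1 ∪ setIM e.symm q.2.1.1 = S.1.1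
        rw [← setIM_union, hq', setIM_top]
      · have r1 : setIM e (setIM e.symm q.1.1.1) = q.1.1.1 := by
          have := setIM_inv e.symm hq1
          rwa [Equiv.symm_symm] at this
        have r2 : setIM e (setIM e.symm q.2.1.1) = q.2.1.1 := by
          have := setIM_inv e.symm hq2
          rwa [Equiv.symm_symm] at this
        exact Prod.ext (Subtype.ext (Subtype.ext r1)) (Subtype.ext (Subtype.ext r2))
  rw [NNc, NNc, ← himg, Set.ncard_image_of_injOn hinj]

private lemma continuous_NNc [T2Space V] (hG : IsPackingGraph G) (t : ℕ) :
    Continuous (fun S : IndepSpace G (2 * t) => (NNc G t S : ℝ)) := by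
  rw [continuous_iff_continuousAt]
  intro S
  obtain ⟨O, hOo, hSO, hcard⟩ := exists_nice_nbhd hG S.1 S.2
  have hval : Continuous (Subtype.val : IndepSpace G (2 * t) → SubAtMost V (2 * t)) :=
    continuous_subtype_val
  have hmem : (Subtype.val ⁻¹' O : Set (IndepSpace G (2 * t))) ∈ nhds S :=
    (hOo.preimage hval).mem_nhds hSO
  have heq : ∀ S' : IndepSpace G (2 * t), S'.1 ∈ O → NNc G t S' = NNc G t S := fun S' h =>
    NNc_eq_of_ncard_eq t S' S (by rw [hcard S'.1 h S'.2])
  exact Filter.Tendsto.congr'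
    (Filter.eventuallyEq_of_mem hmem fun S' h =>
      (congrArg (fun n : ℕ => (n : ℝ)) (heq S' h)).symm)
    tendsto_const_nhds

end PairCount

end AtAux

/-- For a compact topological packing graph `G`, the operator
`A_t : C(I_t × I_t)_sym → C(I_{2t})` is surjective: every continuous `g : I_{2t} → ℝ` is of
the form `A_t H` for some continuous symmetric kernel `H`. -/
theorem At_surjective
    {V : Type u} [TopologicalSpace V] [CompactSpace V] [T2Space V]
    (G : SimpleGraph V) (hG : IsPackingGraph G) (t : ℕ)
    (g : C(IndepSpace G (2 * t), ℝ)) :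
    ∃ H : C(IndepSpace G t × IndepSpace G t, ℝ),
      (∀ a b : IndepSpace G t, H (a, b) = H (b, a)) ∧
      ∀ S : IndepSpace G (2 * t), AtFun G t (fun p => H p) S = g S := by
  classical
  have ht2 : T2Space (SubAtMost V (2 * t)) := subAtMost_t2 _
  have hIc : IsClosed {A : SubAtMost V (2 * t) | IndepVerts G A.1} := isClosed_indeps _ hG
  have hmap : Continuous (fun A : ↥{A : SubAtMost V (2 * t) | IndepVerts G A.1} =>
      (⟨A.1, A.2⟩ : IndepSpace G (2 * t))) :=
    Continuous.subtype_mk continuous_subtype_val _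
  have hNN : ∀ S : IndepSpace G (2 * t), ((NNc G t S : ℝ)) ≠ 0 := fun S =>
    Nat.cast_ne_zero.mpr (Nat.pos_iff_ne_zero.mp (NNc_pos t S))
  have hcont : Continuous (fun A : ↥{A : SubAtMost V (2 * t) | IndepVerts G A.1} =>
      g ⟨A.1, A.2⟩ / (NNc G t ⟨A.1, A.2⟩ : ℝ)) :=
    ((map_continuous g).comp hmap).div ((continuous_NNc hG t).comp hmap) fun A => hNN _
  obtain ⟨F, hF⟩ := ContinuousMap.exists_restrict_eq hIc (ContinuousMap.mk _ hcont)
  have hFval : ∀ S : IndepSpace G (2 * t), F S.1 = g S / (NNc G t S : ℝ) := by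
    intro S
    have := congrFun (congrArg (fun φ : C(↥{A : SubAtMost V (2 * t) | IndepVerts G A.1}, ℝ) =>
      ⇑φ) hF) ⟨S.1, S.2⟩
    simp at this; exact this
  refine ⟨⟨fun p => F (unionMap t p.1.1 p.2.1), by
    apply (map_continuous F).comp
    exact (continuous_unionMap t).comp ((continuous_subtype_val.comp continuous_fst).prodMk
      (continuous_subtype_val.comp continuous_snd))⟩, ?_, ?_⟩
  · intro a b
    show F (unionMap t a.1 b.1) = F (unionMap t b.1 a.1)
    exact congrArg F (Subtype.ext (Set.union_comm _ _))
  · intro S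
    have hfin := pairSet_finite (G := G) t S
    show (∑ᶠ (p : IndepSpace G t × IndepSpace G t) (_ : p ∈ pairSet G t S),
      F (unionMap t p.1.1 p.2.1)) = g S
    rw [finsum_mem_eq_finite_toFinset_sum _ hfin]
    have hterm : ∀ p ∈ hfin.toFinset, F (unionMap t p.1.1 p.2.1) = F S.1 := by
      intro p hp
      rw [Set.Finite.mem_toFinset] at hp
      exact congrArg F (Subtype.ext hp)
    rw [Finset.sum_congr rfl hterm, Finset.sum_const]
    have hcards : hfin.toFinset.card = NNc G t S := (Set.ncard_eq_toFinset_card _ hfin).symm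
    rw [hcards, hFval S, nsmul_eq_mul]
    rw [← mul_div_assoc]
    exact mul_div_cancel_left₀ _ (hNN S)


end
end

section
/- Let G = (V, E) be a compact topological packing graph. Then the optimization problem θ'(G)* has a feasible solution: there exist a ∈ ℝ and a continuous positive definite kernel F ∈ C(V × V)_{⪰0} such that F(x, x) ≤ a − 1 for all x ∈ V and F(x, y) ≤ −1 whenever {x, y} is an independent set of cardinality two. -/
open MeasureTheory Set Topology
open scoped NNReal ENNReal

noncomputable section

universe u

variable {V : Type u}

/-- For a compact topological packing graph `G`, the optimization problem
`θ'(G)^*` has a feasible solution: there are `a ∈ ℝ` and a continuous positive definite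
kernel `F` on `V × V` with `F(x,x) ≤ a − 1` for all `x` and `F(x,y) ≤ −1` for all
independent pairs `{x,y} ∈ I_{=2}`. -/
theorem thetaPrimeDual_has_feasible_solution
    {V : Type u} [TopologicalSpace V] [CompactSpace V] [T2Space V]
    (G : SimpleGraph V) (hG : IsPackingGraph G) :
    ∃ (a : ℝ) (F : C(V × V, ℝ)), IsPosDefKernel F ∧
      (∀ x : V, F (x, x) ≤ a - 1) ∧
      ∀ x y : V, x ≠ y → ¬ G.Adj x y → F (x, y) ≤ -1 := by
  -- every point lies in an open clique
  have h1 : ∀ x : V, ∃ U : Set V, IsOpen U ∧ x ∈ U ∧ G.IsClique U := by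
    intro x
    obtain ⟨U, hUo, hsub, hcl⟩ := hG {x} (Set.finite_singleton x)
      (by intro a ha b hb hab; simp_all)
    exact ⟨U, hUo, hsub rfl, hcl⟩
  choose U hUo hUx hUcl using h1
  obtain ⟨s, hs⟩ := IsCompact.elim_finite_subcover (isCompact_univ : IsCompact (Set.univ : Set V))
    U hUo (fun x _ => Set.mem_iUnion.2 ⟨x, hUx x⟩)
  have hcover : (Set.univ : Set V) ⊆ ⋃ i : {x // x ∈ s}, U i := by
    intro x hx
    obtain ⟨i, hi, hxi⟩ := Set.mem_iUnion₂.1 (hs hx)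
    exact Set.mem_iUnion.2 ⟨⟨i, hi⟩, hxi⟩
  obtain ⟨f, hf⟩ := PartitionOfUnity.exists_isSubordinate (ι := {x // x ∈ s})
    (s := (Set.univ : Set V)) isClosed_univ (fun i => U i) (fun i => hUo i) hcover
  have hsum1 : ∀ y : V, ∑ i : {x // x ∈ s}, f i y = 1 := fun y => by
    rw [← finsum_eq_sum_of_fintype]; exact f.sum_eq_one trivial
  set n : ℕ := s.card with hn
  have hcard : (Finset.univ : Finset {x // x ∈ s}).card = n := by
    simp [hn, Fintype.card_coe]
  refine ⟨n, ⟨fun p => (n : ℝ) * ∑ i : {x // x ∈ s}, f i p.1 * f i p.2 - 1, by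
    refine Continuous.sub (Continuous.mul continuous_const ?_) continuous_const
    exact continuous_finset_sum _ fun i _ =>
      ((f i).continuous.comp continuous_fst).mul ((f i).continuous.comp continuous_snd)⟩,
    ⟨?_, ?_⟩, ?_, ?_⟩
  · -- symmetry
    intro a b
    simp only [ContinuousMap.coe_mk]
    congr 1
    congr 1
    exact Finset.sum_congr rfl fun i _ => mul_comm _ _
  · -- PSD
    intro m x c
    simp only [ContinuousMap.coe_mk]
    have key : ∑ j : Fin m, ∑ k : Fin m,
        c j * c k * ((n : ℝ) * ∑ i : {x // x ∈ s}, f i (x j) * f i (x k) - 1)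
        = (n : ℝ) * ∑ i : {x // x ∈ s}, (∑ j : Fin m, c j * f i (x j)) ^ 2
          - (∑ j : Fin m, c j) ^ 2 := by
      have e1 : ∀ i : {x // x ∈ s}, (∑ j : Fin m, c j * f i (x j)) ^ 2
          = ∑ j : Fin m, ∑ k : Fin m, c j * c k * (f i (x j) * f i (x k)) := by
        intro i
        rw [sq, Finset.sum_mul_sum]
        exact Finset.sum_congr rfl fun j _ => Finset.sum_congr rfl fun k _ => by ring
      have e2 : (∑ j : Fin m, c j) ^ 2 = ∑ j : Fin m, ∑ k : Fin m, c j * c k := by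
        rw [sq, Finset.sum_mul_sum]
      have e5 : ∑ j : Fin m, ∑ k : Fin m,
          c j * c k * ∑ i : {x // x ∈ s}, f i (x j) * f i (x k)
          = ∑ i : {x // x ∈ s}, (∑ j : Fin m, c j * f i (x j)) ^ 2 := by
        simp only [e1, Finset.mul_sum]
        conv_rhs => rw [Finset.sum_comm]
        refine Finset.sum_congr rfl fun j _ => ?_
        rw [Finset.sum_comm]
      calc ∑ j : Fin m, ∑ k : Fin m,
            c j * c k * ((n : ℝ) * ∑ i : {x // x ∈ s}, f i (x j) * f i (x k) - 1)
          = ∑ j : Fin m, ∑ k : Fin m,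
              ((n : ℝ) * (c j * c k * ∑ i : {x // x ∈ s}, f i (x j) * f i (x k))
                - c j * c k) :=
            Finset.sum_congr rfl fun j _ => Finset.sum_congr rfl fun k _ => by ring
        _ = (n : ℝ) * (∑ j : Fin m, ∑ k : Fin m,
              c j * c k * ∑ i : {x // x ∈ s}, f i (x j) * f i (x k))
            - ∑ j : Fin m, ∑ k : Fin m, c j * c k := by
            simp only [Finset.sum_sub_distrib, Finset.mul_sum]
        _ = (n : ℝ) * ∑ i : {x // x ∈ s}, (∑ j : Fin m, c j * f i (x j)) ^ 2
            - (∑ j : Fin m, c j) ^ 2 := by rw [e5, ← e2]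
    rw [key, sub_nonneg]
    have e3 : (∑ j : Fin m, c j) = ∑ i : {x // x ∈ s}, ∑ j : Fin m, c j * f i (x j) := by
      rw [Finset.sum_comm]
      refine Finset.sum_congr rfl fun j _ => ?_
      rw [← Finset.mul_sum, hsum1, mul_one]
    rw [e3]
    calc (∑ i : {x // x ∈ s}, ∑ j : Fin m, c j * f i (x j)) ^ 2
        ≤ ((Finset.univ : Finset {x // x ∈ s}).card : ℝ) *
            ∑ i : {x // x ∈ s}, (∑ j : Fin m, c j * f i (x j)) ^ 2 :=
          sq_sum_le_card_mul_sum_sq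
      _ = (n : ℝ) * ∑ i : {x // x ∈ s}, (∑ j : Fin m, c j * f i (x j)) ^ 2 := by
          rw [hcard]
  · -- diagonal bound
    intro x
    simp only [ContinuousMap.coe_mk]
    have : ∑ i : {x // x ∈ s}, f i x * f i x ≤ 1 := by
      rw [← hsum1 x]
      exact Finset.sum_le_sum fun i _ =>
        mul_le_of_le_one_left (f.nonneg i x) (f.le_one i x)
    have hn0 : (0 : ℝ) ≤ n := Nat.cast_nonneg n
    nlinarith
  · -- independent pairs
    intro x y hxy hadj
    simp only [ContinuousMap.coe_mk]
    have hz : ∑ i : {x // x ∈ s}, f i x * f i y = 0 := by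
      refine Finset.sum_eq_zero fun i _ => ?_
      by_contra h
      have hx : f i x ≠ 0 := fun h0 => h (by rw [h0, zero_mul])
      have hy : f i y ≠ 0 := fun h0 => h (by rw [h0, mul_zero])
      have hxU : x ∈ U i := hf i (subset_closure hx)
      have hyU : y ∈ U i := hf i (subset_closure hy)
      exact hadj (hUcl i hxU hyU hxy)
    rw [hz, mul_zero, zero_sub]

end
end

section
/- Let G = (V, E) be a compact topological packing graph. Then the first step of the dual generalized Lasserre hierarchy equals the generalized θ'-number: las_1(G)* = θ'(G)*. -/
open MeasureTheory Set Topology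
open scoped NNReal ENNReal

noncomputable section

universe u

variable {V : Type u}

/-- The value of the generalized `θ'`-number in its dual ("infimum") formulation:
`θ'(G)^* = inf { a : F ∈ C(V × V)_{⪰0}, F(x,x) ≤ a − 1, F(x,y) ≤ −1 on I_{=2} }`. -/
def thetaDualValue [TopologicalSpace V] (G : SimpleGraph V) : ℝ :=
  sInf {a : ℝ | ∃ F : C(V × V, ℝ), IsPosDefKernel F ∧
    (∀ x : V, F (x, x) ≤ a - 1) ∧
    ∀ x y : V, x ≠ y → ¬ G.Adj x y → F (x, y) ≤ -1}
section Statement14Aux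

set_option linter.unusedSectionVars false
set_option linter.unusedVariables false

open Function

variable {V : Type u} [TopologicalSpace V] (G : SimpleGraph V)

lemma indepVerts_of_subsingleton {S : Set V} (hS : S.Subsingleton) : IndepVerts G S := by
  intro x hx y hy hadj
  cases hS hx hy
  exact G.loopless.irrefl _ hadj

/-- The singleton `{x}` as an element of `I_1`. -/
def sing (x : V) : IndepSpace G 1 :=
  ⟨⟨{x}, Set.finite_singleton x, by simp⟩,
    indepVerts_of_subsingleton G Set.subsingleton_singleton⟩

lemma indepSpace_ext {t : ℕ} {S T : IndepSpace G t} (h : S.1.1 = T.1.1) : S = T :=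
  Subtype.ext (Subtype.ext h)

lemma subAtMost_one_cases (S : SubAtMost V 1) : S.1 = ∅ ∨ ∃ x : V, S.1 = {x} :=
  (Set.ncard_le_one_iff_eq S.2.1).mp S.2.2

lemma indepSpace_one_cases (S : IndepSpace G 1) :
    S = emptyIndep G 1 ∨ ∃ x : V, S = sing G x := by
  rcases subAtMost_one_cases S.1 with h | ⟨x, h⟩
  · exact Or.inl (indepSpace_ext G h)
  · exact Or.inr ⟨x, indepSpace_ext G h⟩

/-- The canonical map `V ⊕ Unit → sub_1(V)`. -/
def q1 : V ⊕ Unit → SubAtMost V 1 :=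
  qMap V 1 ∘ Sum.map (fun x => (fun _ : Fin 1 => x)) id

lemma q1_inl (x : V) : (q1 (Sum.inl x) : SubAtMost V 1).1 = {x} := by
  simp [q1, qMap]

lemma q1_inr (u : Unit) : (q1 (Sum.inr u) : SubAtMost V 1).1 = ∅ := rfl

lemma qMap_one_surjective : Surjective (qMap V 1) := by
  intro S
  rcases subAtMost_one_cases S with h | ⟨x, h⟩
  · exact ⟨Sum.inr (), Subtype.ext h.symm⟩
  · exact ⟨Sum.inl fun _ => x, Subtype.ext (by rw [h]; simp [qMap])⟩

lemma isQuotientMap_qMap_one : IsQuotientMap (qMap V 1) :=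
  ⟨⟨rfl⟩, qMap_one_surjective⟩

lemma isQuotientMap_q1 : IsQuotientMap (q1 : V ⊕ Unit → SubAtMost V 1) := by
  refine isQuotientMap_qMap_one.comp ?_
  have h := (Homeomorph.sumCongr ((Homeomorph.funUnique (Fin 1) V).symm)
    (Homeomorph.refl Unit)).isQuotientMap
  convert h using 1
  funext s; cases s <;> rfl

lemma q1_injective : Injective (q1 : V ⊕ Unit → SubAtMost V 1) := by
  intro s t h
  have h' := congrArg Subtype.val h
  cases s with
  | inl x =>
    cases t with
    | inl y =>
      rw [q1_inl, q1_inl] at h'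
      rw [Set.singleton_eq_singleton_iff.mp h']
    | inr u =>
      rw [q1_inl, q1_inr] at h'
      exact absurd h' (Set.singleton_ne_empty x)
  | inr u =>
    cases t with
    | inl y =>
      rw [q1_inr, q1_inl] at h'
      exact absurd h'.symm (Set.singleton_ne_empty y)
    | inr v => rfl

def subEquivOne : (V ⊕ Unit) ≃ SubAtMost V 1 :=
  Equiv.ofBijective q1 ⟨q1_injective, isQuotientMap_q1.surjective⟩

/-- `sub_1(V)` is homeomorphic to `V ⊕ Unit`. -/
def subHomeoOne : (V ⊕ Unit) ≃ₜ SubAtMost V 1 where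
  toEquiv := subEquivOne
  continuous_toFun := isQuotientMap_q1.continuous
  continuous_invFun := by
    rw [isQuotientMap_q1.continuous_iff]
    exact continuous_id.congr fun s => ((subEquivOne (V := V)).symm_apply_apply s).symm

lemma indep_one_full (S : SubAtMost V 1) : IndepVerts G S.1 := by
  refine indepVerts_of_subsingleton G ?_
  rcases subAtMost_one_cases S with h | ⟨x, h⟩ <;> rw [h]
  · exact Set.subsingleton_empty
  · exact Set.subsingleton_singleton

/-- `I_1` is homeomorphic to `sub_1(V)`. -/
def indepHomeoOne : IndepSpace G 1 ≃ₜ SubAtMost V 1 where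
  toFun S := S.1
  invFun S := ⟨S, indep_one_full G S⟩
  left_inv S := rfl
  right_inv S := rfl
  continuous_toFun := continuous_subtype_val
  continuous_invFun := Continuous.subtype_mk continuous_id _

/-- `I_1` is homeomorphic to `V ⊕ Unit`. -/
def psi : (V ⊕ Unit) ≃ₜ IndepSpace G 1 :=
  subHomeoOne.trans (indepHomeoOne G).symm

lemma psi_inl (x : V) : psi G (Sum.inl x) = sing G x :=
  indepSpace_ext G (q1_inl x)

lemma psi_inr (u : Unit) : psi G (Sum.inr u) = emptyIndep G 1 :=
  indepSpace_ext G rfl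

lemma psi_symm_sing (x : V) : (psi G).symm (sing G x) = Sum.inl x := by
  rw [← psi_inl]; exact Homeomorph.symm_apply_apply _ _

lemma psi_symm_empty : (psi G).symm (emptyIndep G 1) = Sum.inr () := by
  rw [← psi_inr G ()]; exact Homeomorph.symm_apply_apply _ _

lemma continuous_sing : Continuous (sing G) := by
  have h : sing G = fun x => psi G (Sum.inl x) := funext fun x => (psi_inl G x).symm
  rw [h]; exact (psi G).continuous.comp continuous_inl

/-- The singleton `{x}` as an element of `I_2`. -/
def sing2 (x : V) : IndepSpace G (2 * 1) :=
  ⟨⟨{x}, Set.finite_singleton x, by simp⟩,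
    indepVerts_of_subsingleton G Set.subsingleton_singleton⟩

/-- The pair `{x,y}` (with `x,y` non-adjacent) as an element of `I_2`. -/
def pair2 (x y : V) (h : ¬ G.Adj x y) : IndepSpace G (2 * 1) :=
  ⟨⟨{x, y}, (Set.finite_singleton y).insert x, by
      refine le_trans (Set.ncard_insert_le x {y}) ?_
      simp⟩, by
    intro u hu v hv hadj
    simp only [Set.mem_insert_iff, Set.mem_singleton_iff] at hu hv
    rcases hu with rfl | rfl <;> rcases hv with rfl | rfl
    · exact G.loopless.irrefl _ hadj
    · exact h hadj
    · exact h hadj.symm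
    · exact G.loopless.irrefl _ hadj⟩

lemma sing2_ne_empty (x : V) : sing2 G x ≠ emptyIndep G (2 * 1) := by
  intro h
  exact Set.singleton_ne_empty x (congrArg (fun S => S.1.1) h)

lemma pair2_ne_empty (x y : V) (h : ¬ G.Adj x y) :
    pair2 G x y h ≠ emptyIndep G (2 * 1) := by
  intro he
  have := congrArg (fun S => S.1.1) he
  simp only [pair2, emptyIndep] at this
  exact absurd (this ▸ Set.mem_insert x {y}) (Set.notMem_empty x)

lemma indepSpace_two_cases (S : IndepSpace G (2 * 1)) :
    S = emptyIndep G (2 * 1) ∨ (∃ x : V, S = sing2 G x) ∨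
      ∃ (x y : V) (hxy : x ≠ y) (h : ¬ G.Adj x y), S = pair2 G x y h := by
  have hle : S.1.1.ncard ≤ 2 := S.1.2.2
  obtain h0 | h1 | h2 : S.1.1.ncard = 0 ∨ S.1.1.ncard = 1 ∨ S.1.1.ncard = 2 := by omega
  · exact Or.inl (indepSpace_ext G ((Set.ncard_eq_zero S.1.2.1).mp h0))
  · obtain ⟨x, hx⟩ := Set.ncard_eq_one.mp h1
    exact Or.inr (Or.inl ⟨x, indepSpace_ext G hx⟩)
  · obtain ⟨x, y, hxy, hS⟩ := Set.ncard_eq_two.mp h2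
    have hadj : ¬ G.Adj x y := by
      refine S.2 ?_ ?_
      · rw [hS]; exact Set.mem_insert x {y}
      · rw [hS]; exact Set.mem_insert_of_mem x rfl
    exact Or.inr (Or.inr ⟨x, y, hxy, hadj, indepSpace_ext G hS⟩)

lemma finsum_cond_eq_sum {α : Type*} (f : α → ℝ) (P : α → Prop) (s : Finset α)
    (h : ∀ a, P a ↔ a ∈ s) : (∑ᶠ (a : α) (_ : P a), f a) = ∑ a ∈ s, f a := by
  have hs : {a | P a} = ↑s := by ext a; simpa using h a
  rw [show (∑ᶠ (a : α) (_ : P a), f a) = ∑ᶠ a ∈ {a | P a}, f a from rfl, hs,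
    finsum_mem_coe_finset]

lemma sing_ne_empty (x : V) : sing G x ≠ emptyIndep G 1 := by
  intro h
  exact Set.singleton_ne_empty x (congrArg (fun S => S.1.1) h)

lemma atFun_sing (K : IndepSpace G 1 × IndepSpace G 1 → ℝ) (x : V) :
    AtFun G 1 K (sing2 G x) =
      K (emptyIndep G 1, sing G x) + K (sing G x, emptyIndep G 1) +
        K (sing G x, sing G x) := by
  classical
  have hne : (emptyIndep G 1, sing G x) ≠ (sing G x, emptyIndep G 1) := by
    intro h
    exact sing_ne_empty G x (congrArg Prod.fst h).symm
  have hne2 : (emptyIndep G 1, sing G x) ≠ (sing G x, sing G x) := by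
    intro h
    exact sing_ne_empty G x (congrArg Prod.fst h).symm
  have hne3 : (sing G x, emptyIndep G 1) ≠ (sing G x, sing G x) := by
    intro h
    exact sing_ne_empty G x (congrArg Prod.snd h).symm
  rw [AtFun, finsum_cond_eq_sum _ _
    ({(emptyIndep G 1, sing G x), (sing G x, emptyIndep G 1), (sing G x, sing G x)} :
      Finset (IndepSpace G 1 × IndepSpace G 1)) ?_]
  · rw [Finset.sum_insert (by simp [hne, hne2]), Finset.sum_pair hne3, add_assoc]
  · rintro ⟨p1, p2⟩
    simp only [Finset.mem_insert, Finset.mem_singleton]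
    constructor
    · intro hU
      rcases indepSpace_one_cases G p1 with rfl | ⟨y, rfl⟩
      · rcases indepSpace_one_cases G p2 with rfl | ⟨z, rfl⟩
        · exact absurd hU (by simp [emptyIndep, sing2])
        · have : z = x := by
            have := hU
            simp only [emptyIndep, sing, sing2, Set.empty_union] at this
            exact Set.singleton_eq_singleton_iff.mp this
          rw [this]
          exact Or.inl rfl
      · have hy : y = x := by
          have hmem : y ∈ (sing2 G x).1.1 := by
            rw [← hU]; exact Set.mem_union_left _ rfl
          simpa [sing2] using hmem
        rcases indepSpace_one_cases G p2 with rfl | ⟨z, rfl⟩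
        · rw [hy]; exact Or.inr (Or.inl rfl)
        · have hz : z = x := by
            have hmem : z ∈ (sing2 G x).1.1 := by
              rw [← hU]; exact Set.mem_union_right _ rfl
            simpa [sing2] using hmem
          rw [hy, hz]; exact Or.inr (Or.inr rfl)
    · rintro (h | h | h) <;> rw [Prod.ext_iff] at h <;>
        obtain ⟨h1, h2⟩ := h <;> subst h1 <;> subst h2 <;>
        simp [emptyIndep, sing, sing2]

lemma atFun_pair (K : IndepSpace G 1 × IndepSpace G 1 → ℝ) (x y : V) (hxy : x ≠ y)
    (h : ¬ G.Adj x y) :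
    AtFun G 1 K (pair2 G x y h) = K (sing G x, sing G y) + K (sing G y, sing G x) := by
  classical
  have hne : (sing G x, sing G y) ≠ (sing G y, sing G x) := by
    intro he
    have := congrArg (fun p => p.1.1.1) he
    simp only [sing] at this
    exact hxy (Set.singleton_eq_singleton_iff.mp this)
  rw [AtFun, finsum_cond_eq_sum _ _
    ({(sing G x, sing G y), (sing G y, sing G x)} :
      Finset (IndepSpace G 1 × IndepSpace G 1)) ?_]
  · rw [Finset.sum_pair hne]
  · rintro ⟨p1, p2⟩
    simp only [Finset.mem_insert, Finset.mem_singleton]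
    constructor
    · intro hU
      have hUs : p1.1.1 ∪ p2.1.1 = {x, y} := hU
      rcases indepSpace_one_cases G p1 with rfl | ⟨u, rfl⟩
      · exfalso
        have : p2.1.1 = {x, y} := by simpa [emptyIndep] using hUs
        have h2 := p2.1.2.2
        rw [this, Set.ncard_pair hxy] at h2
        omega
      · rcases indepSpace_one_cases G p2 with rfl | ⟨v, rfl⟩
        · exfalso
          have : ({u} : Set V) = {x, y} := by simpa [emptyIndep, sing] using hUs
          have hx' : x ∈ ({u} : Set V) := this ▸ Set.mem_insert x {y}
          have hy' : y ∈ ({u} : Set V) := this ▸ Set.mem_insert_of_mem x rfl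
          exact hxy (hx'.trans hy'.symm)
        · have huv : ({u, v} : Set V) = {x, y} := by
            rw [← Set.singleton_union]; exact hUs
          have hu : u = x ∨ u = y := by
            have : u ∈ ({x, y} : Set V) := huv ▸ Set.mem_insert u {v}
            simpa using this
          have hv : v = x ∨ v = y := by
            have : v ∈ ({x, y} : Set V) := huv ▸ Set.mem_insert_of_mem u rfl
            simpa using this
          rcases hu with hu | hu
          · left
            rcases hv with hv | hv
            · exfalso
              have hy2 : y ∈ ({u, v} : Set V) := by
                rw [huv]; exact Set.mem_insert_of_mem _ rfl
              simp only [Set.mem_insert_iff, Set.mem_singleton_iff] at hy2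
              rcases hy2 with h' | h' <;> rw [h'] at hxy
              · rw [hu] at hxy; exact hxy rfl
              · rw [hv] at hxy; exact hxy rfl
            · rw [hu, hv]
          · right
            rcases hv with hv | hv
            · rw [hu, hv]
            · exfalso
              have hx2 : x ∈ ({u, v} : Set V) := by rw [huv]; exact Set.mem_insert _ _
              simp only [Set.mem_insert_iff, Set.mem_singleton_iff] at hx2
              rcases hx2 with h' | h'
              · rw [h', hu] at hxy; exact hxy rfl
              · rw [h', hv] at hxy; exact hxy rfl
    · rintro (he | he) <;> rw [Prod.ext_iff] at he <;>
        obtain ⟨h1, h2⟩ := he <;> subst h1 <;> subst h2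
      · show ({x} : Set V) ∪ {y} = {x, y}
        rw [Set.singleton_union]
      · show ({y} : Set V) ∪ {x} = {x, y}
        rw [Set.singleton_union, Set.pair_comm]

lemma psd_diag {X : Type*} [TopologicalSpace X] {K : C(X × X, ℝ)}
    (hK : IsPosDefKernel K) (x : X) : 0 ≤ K (x, x) := by
  have h := hK.2 1 (fun _ => x) (fun _ => 1)
  simpa using h

lemma psd_two {X : Type*} [TopologicalSpace X] {K : C(X × X, ℝ)}
    (hK : IsPosDefKernel K) (A B : X) :
    0 ≤ K (A, A) + K (A, B) + K (B, A) + K (B, B) := by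
  have h := hK.2 2 ![A, B] ![1, 1]
  simp only [Fin.sum_univ_two, Matrix.cons_val_zero, Matrix.cons_val_one,
    Matrix.head_cons, one_mul] at h
  linarith

lemma psd_schur {X : Type*} [TopologicalSpace X] {K : C(X × X, ℝ)}
    (hK : IsPosDefKernel K) (z : X) (hz : 0 < K (z, z)) (m : ℕ) (y : Fin m → X)
    (d : Fin m → ℝ) :
    (∑ i : Fin m, d i * K (z, y i)) ^ 2 ≤
      K (z, z) * ∑ i : Fin m, ∑ j : Fin m, d i * d j * K (y i, y j) := by
  set c := K (z, z) with hc
  set Sg := ∑ i : Fin m, d i * K (z, y i) with hSg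
  set Q := ∑ i : Fin m, ∑ j : Fin m, d i * d j * K (y i, y j) with hQ
  set e : ℝ := -(Sg / c) with he
  have h := hK.2 (m + 1) (Fin.cons z y) (Fin.cons e d)
  simp only [Fin.sum_univ_succ, Fin.cons_zero, Fin.cons_succ] at h
  have h1 : ∑ j : Fin m, e * d j * K (z, y j) = e * Sg := by
    rw [hSg, Finset.mul_sum]
    exact Finset.sum_congr rfl fun j _ => by ring
  have h2 : ∑ i : Fin m, (d i * e * K (y i, z) +
      ∑ j : Fin m, d i * d j * K (y i, y j)) = e * Sg + Q := by
    rw [Finset.sum_add_distrib, hQ, hSg, Finset.mul_sum]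
    congr 1
    exact Finset.sum_congr rfl fun i _ => by rw [hK.1 (y i) z]; ring
  rw [h1, h2] at h
  have hkey : 0 ≤ Q - Sg ^ 2 / c := by
    have hexp : e * e * c + e * Sg + (e * Sg + Q) = Q - Sg ^ 2 / c := by
      rw [he]; field_simp; ring
    linarith [hexp ▸ h]
  have h3 : Sg ^ 2 / c ≤ Q := by linarith
  calc Sg ^ 2 = Sg ^ 2 / c * c := by field_simp
    _ ≤ Q * c := mul_le_mul_of_nonneg_right h3 hz.le
    _ = c * Q := mul_comm _ _

lemma mem_theta_of_las [Nonempty V] (K : C(IndepSpace G 1 × IndepSpace G 1, ℝ))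
    (hK : lasDualFeasible G 1 K) :
    ∃ F : C(V × V, ℝ), IsPosDefKernel F ∧
      (∀ x : V, F (x, x) ≤ K (emptyIndep G 1, emptyIndep G 1) - 1) ∧
      ∀ x y : V, x ≠ y → ¬ G.Adj x y → F (x, y) ≤ -1 := by
  obtain ⟨hpsd, hcons⟩ := hK
  have hsym : ∀ S T, K (S, T) = K (T, S) := hpsd.1
  -- the singleton constraint
  have hsing : ∀ x : V, K (emptyIndep G 1, sing G x) + K (sing G x, emptyIndep G 1) +
      K (sing G x, sing G x) ≤ -1 := by
    intro x
    have h := hcons (sing2 G x) (sing2_ne_empty G x)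
    rw [atFun_sing G (fun p => K p) x] at h
    have hcard : (sing2 G x).1.1.ncard = 1 := by simp [sing2]
    rwa [if_pos hcard] at h
  -- the pair constraint
  have hpair : ∀ x y : V, x ≠ y → ¬ G.Adj x y → K (sing G x, sing G y) ≤ 0 := by
    intro x y hxy hnadj
    have h := hcons (pair2 G x y hnadj) (pair2_ne_empty G x y hnadj)
    rw [atFun_pair G (fun p => K p) x y hxy hnadj] at h
    have hcard : ¬ (pair2 G x y hnadj).1.1.ncard = 1 := by
      simp [pair2, Set.ncard_pair hxy]
    rw [if_neg hcard] at h
    have := hsym (sing G x) (sing G y)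
    linarith
  have hMdiag : ∀ x : V, 0 ≤ K (sing G x, sing G x) := fun x => psd_diag hpsd _
  have hgneg : ∀ x : V, K (emptyIndep G 1, sing G x) ≤ -(1/2) := by
    intro x
    have := hsing x
    have := hMdiag x
    have := hsym (sing G x) (emptyIndep G 1)
    linarith
  have hglt : ∀ x : V, K (emptyIndep G 1, sing G x) < 0 := fun x =>
    lt_of_le_of_lt (hgneg x) (by norm_num)
  have hcc1 : 1 ≤ K (emptyIndep G 1, emptyIndep G 1) := by
    obtain ⟨x⟩ := ‹Nonempty V›
    have h2 := psd_two hpsd (emptyIndep G 1) (sing G x)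
    have := hsing x
    linarith
  have hccpos : 0 < K (emptyIndep G 1, emptyIndep G 1) := by linarith
  have hdenpos : ∀ x y : V,
      0 < K (emptyIndep G 1, sing G x) * K (emptyIndep G 1, sing G y) := fun x y =>
    mul_pos_of_neg_of_neg (hglt x) (hglt y)
  -- continuity of the ingredients
  have hgcont : Continuous fun x : V => K (emptyIndep G 1, sing G x) :=
    K.continuous.comp (continuous_const.prodMk (continuous_sing G))
  have hMcont : Continuous fun p : V × V => K (sing G p.1, sing G p.2) :=
    K.continuous.comp (((continuous_sing G).comp continuous_fst).prodMk
      ((continuous_sing G).comp continuous_snd))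
  refine ⟨⟨fun p => K (emptyIndep G 1, emptyIndep G 1) * K (sing G p.1, sing G p.2) /
      (K (emptyIndep G 1, sing G p.1) * K (emptyIndep G 1, sing G p.2)) - 1, ?_⟩,
    ⟨?_, ?_⟩, ?_, ?_⟩
  · exact ((continuous_const.mul hMcont).div
      ((hgcont.comp continuous_fst).mul (hgcont.comp continuous_snd))
      (fun p => ne_of_gt (hdenpos p.1 p.2))).sub continuous_const
  · -- symmetry
    intro a b
    simp only [ContinuousMap.coe_mk]
    rw [hsym (sing G a) (sing G b), mul_comm (K (emptyIndep G 1, sing G a))]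
  · -- positive semidefiniteness
    intro m x c
    simp only [ContinuousMap.coe_mk]
    set d : Fin m → ℝ := fun i => c i / K (emptyIndep G 1, sing G (x i)) with hd
    have key := psd_schur hpsd (emptyIndep G 1) hccpos m (fun i => sing G (x i)) d
    have hterm : ∀ i j : Fin m, c i * c j *
        (K (emptyIndep G 1, emptyIndep G 1) * K (sing G (x i), sing G (x j)) /
          (K (emptyIndep G 1, sing G (x i)) * K (emptyIndep G 1, sing G (x j))) - 1) =
        K (emptyIndep G 1, emptyIndep G 1) *
          (d i * d j * K (sing G (x i), sing G (x j))) -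
        (d i * K (emptyIndep G 1, sing G (x i))) *
          (d j * K (emptyIndep G 1, sing G (x j))) := by
      intro i j
      have hi := ne_of_lt (hglt (x i))
      have hj := ne_of_lt (hglt (x j))
      rw [hd]
      field_simp
    calc (0:ℝ) ≤ K (emptyIndep G 1, emptyIndep G 1) *
          (∑ i : Fin m, ∑ j : Fin m, d i * d j * K (sing G (x i), sing G (x j))) -
        (∑ i : Fin m, d i * K (emptyIndep G 1, sing G (x i))) *
          (∑ j : Fin m, d j * K (emptyIndep G 1, sing G (x j))) := by
          have hsq : (∑ i : Fin m, d i * K (emptyIndep G 1, sing G (x i))) *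
              (∑ j : Fin m, d j * K (emptyIndep G 1, sing G (x j))) =
              (∑ i : Fin m, d i * K (emptyIndep G 1, sing G (x i))) ^ 2 := by
            rw [sq]
          rw [hsq]
          linarith [key]
      _ = ∑ i : Fin m, ∑ j : Fin m,
            (K (emptyIndep G 1, emptyIndep G 1) *
              (d i * d j * K (sing G (x i), sing G (x j))) -
            (d i * K (emptyIndep G 1, sing G (x i))) *
              (d j * K (emptyIndep G 1, sing G (x j)))) := by
          rw [Finset.sum_mul_sum, Finset.mul_sum]
          rw [← Finset.sum_sub_distrib]
          refine Finset.sum_congr rfl fun i _ => ?_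
          rw [Finset.mul_sum, ← Finset.sum_sub_distrib]
      _ = ∑ i : Fin m, ∑ j : Fin m, c i * c j *
            (K (emptyIndep G 1, emptyIndep G 1) * K (sing G (x i), sing G (x j)) /
              (K (emptyIndep G 1, sing G (x i)) * K (emptyIndep G 1, sing G (x j))) - 1) := by
          exact Finset.sum_congr rfl fun i _ => Finset.sum_congr rfl fun j _ =>
            (hterm i j).symm
  · -- diagonal constraint
    intro x
    simp only [ContinuousMap.coe_mk]
    have hM : K (sing G x, sing G x) ≤
        K (emptyIndep G 1, sing G x) * K (emptyIndep G 1, sing G x) := by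
      nlinarith [sq_nonneg (K (emptyIndep G 1, sing G x) + 1), hsing x,
        hsym (sing G x) (emptyIndep G 1)]
    have hdiv : K (emptyIndep G 1, emptyIndep G 1) * K (sing G x, sing G x) /
        (K (emptyIndep G 1, sing G x) * K (emptyIndep G 1, sing G x)) ≤
        K (emptyIndep G 1, emptyIndep G 1) := by
      rw [div_le_iff₀ (hdenpos x x)]
      nlinarith [hM, hccpos]
    linarith
  · -- off-diagonal constraint
    intro x y hxy hnadj
    simp only [ContinuousMap.coe_mk]
    have h1 : K (emptyIndep G 1, emptyIndep G 1) * K (sing G x, sing G y) ≤ 0 :=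
      mul_nonpos_iff.mpr (Or.inl ⟨le_of_lt hccpos, hpair x y hxy hnadj⟩)
    have h2 : K (emptyIndep G 1, emptyIndep G 1) * K (sing G x, sing G y) /
        (K (emptyIndep G 1, sing G x) * K (emptyIndep G 1, sing G y)) ≤ 0 :=
      div_nonpos_of_nonpos_of_nonneg h1 (le_of_lt (hdenpos x y))
    linarith

/-- The kernel on `(V ⊕ Unit)²` corresponding to a `θ'`-feasible pair `(F, a)`. -/
def kFun (F : C(V × V, ℝ)) (a : ℝ) (x₀ : V) : (V ⊕ Unit) × (V ⊕ Unit) → ℝ := fun p =>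
  (Sum.elim (fun _ => (-1:ℝ)) (fun _ => a) p.1 * Sum.elim (fun _ => (-1:ℝ)) (fun _ => a) p.2 +
    Sum.elim (fun _ => (1:ℝ)) (fun _ => 0) p.1 * Sum.elim (fun _ => (1:ℝ)) (fun _ => 0) p.2 *
      F (Sum.elim id (fun _ => x₀) p.1, Sum.elim id (fun _ => x₀) p.2)) / a

lemma kFun_inl_inl (F : C(V × V, ℝ)) (a : ℝ) (x₀ : V) (x y : V) :
    kFun F a x₀ (Sum.inl x, Sum.inl y) = (1 + F (x, y)) / a := by
  simp [kFun]

lemma kFun_inl_inr (F : C(V × V, ℝ)) {a : ℝ} (ha : a ≠ 0) (x₀ : V) (x : V) (u : Unit) :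
    kFun F a x₀ (Sum.inl x, Sum.inr u) = -1 := by
  simp only [kFun, Sum.elim_inl, Sum.elim_inr, mul_zero, zero_mul, mul_comm]
  field_simp
  ring

lemma kFun_inr_inl (F : C(V × V, ℝ)) {a : ℝ} (ha : a ≠ 0) (x₀ : V) (u : Unit) (y : V) :
    kFun F a x₀ (Sum.inr u, Sum.inl y) = -1 := by
  simp only [kFun, Sum.elim_inl, Sum.elim_inr, mul_zero, zero_mul, mul_comm]
  field_simp
  ring

lemma kFun_inr_inr (F : C(V × V, ℝ)) {a : ℝ} (ha : a ≠ 0) (x₀ : V) (u v : Unit) :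
    kFun F a x₀ (Sum.inr u, Sum.inr v) = a := by
  simp only [kFun, Sum.elim_inr, mul_zero, zero_mul, add_zero]
  field_simp

lemma continuous_kFun (F : C(V × V, ℝ)) (a : ℝ) (x₀ : V) : Continuous (kFun F a x₀) := by
  unfold kFun
  have hw : Continuous (Sum.elim (fun _ : V => (-1:ℝ)) (fun _ : Unit => a)) :=
    Continuous.sumElim continuous_const continuous_const
  have hχ : Continuous (Sum.elim (fun _ : V => (1:ℝ)) (fun _ : Unit => (0:ℝ))) :=
    Continuous.sumElim continuous_const continuous_const
  have hP : Continuous (Sum.elim (id : V → V) (fun _ : Unit => x₀)) :=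
    Continuous.sumElim continuous_id continuous_const
  exact (((hw.comp continuous_fst).mul (hw.comp continuous_snd)).add
    (((hχ.comp continuous_fst).mul (hχ.comp continuous_snd)).mul
      (F.continuous.comp ((hP.comp continuous_fst).prodMk (hP.comp continuous_snd))))).div_const a

lemma mem_las_of_theta [Nonempty V] (F : C(V × V, ℝ)) (a : ℝ) (hF : IsPosDefKernel F)
    (hdiag : ∀ x : V, F (x, x) ≤ a - 1)
    (hoff : ∀ x y : V, x ≠ y → ¬ G.Adj x y → F (x, y) ≤ -1) :
    ∃ K : C(IndepSpace G 1 × IndepSpace G 1, ℝ), lasDualFeasible G 1 K ∧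
      K (emptyIndep G 1, emptyIndep G 1) = a := by
  obtain ⟨x₀⟩ := ‹Nonempty V›
  have ha1 : 1 ≤ a := by linarith [psd_diag hF x₀, hdiag x₀]
  have hapos : (0:ℝ) < a := by linarith
  have hane : a ≠ 0 := ne_of_gt hapos
  set K : C(IndepSpace G 1 × IndepSpace G 1, ℝ) :=
    ⟨fun p => kFun F a x₀ ((psi G).symm p.1, (psi G).symm p.2),
      (continuous_kFun F a x₀).comp
        (((psi G).symm.continuous.comp continuous_fst).prodMk
          ((psi G).symm.continuous.comp continuous_snd))⟩ with hKdef
  have hKee : K (emptyIndep G 1, emptyIndep G 1) = a := by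
    show kFun F a x₀ ((psi G).symm (emptyIndep G 1), (psi G).symm (emptyIndep G 1)) = a
    rw [psi_symm_empty]
    exact kFun_inr_inr F hane x₀ () ()
  have hKes : ∀ x : V, K (emptyIndep G 1, sing G x) = -1 := by
    intro x
    show kFun F a x₀ ((psi G).symm (emptyIndep G 1), (psi G).symm (sing G x)) = -1
    rw [psi_symm_empty, psi_symm_sing]
    exact kFun_inr_inl F hane x₀ () x
  have hKse : ∀ x : V, K (sing G x, emptyIndep G 1) = -1 := by
    intro x
    show kFun F a x₀ ((psi G).symm (sing G x), (psi G).symm (emptyIndep G 1)) = -1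
    rw [psi_symm_empty, psi_symm_sing]
    exact kFun_inl_inr F hane x₀ x ()
  have hKss : ∀ x y : V, K (sing G x, sing G y) = (1 + F (x, y)) / a := by
    intro x y
    show kFun F a x₀ ((psi G).symm (sing G x), (psi G).symm (sing G y)) = (1 + F (x, y)) / a
    rw [psi_symm_sing, psi_symm_sing]
    exact kFun_inl_inl F a x₀ x y
  refine ⟨K, ⟨⟨?_, ?_⟩, ?_⟩, hKee⟩
  · -- symmetry
    intro S T
    rcases indepSpace_one_cases G S with rfl | ⟨x, rfl⟩ <;>
      rcases indepSpace_one_cases G T with rfl | ⟨y, rfl⟩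
    · rfl
    · rw [hKes y, hKse y]
    · rw [hKes x, hKse x]
    · rw [hKss x y, hKss y x, hF.1 x y]
  · -- positive semidefiniteness
    intro m x c
    set w : V ⊕ Unit → ℝ := Sum.elim (fun _ => -1) (fun _ => a) with hw
    set P : V ⊕ Unit → V := Sum.elim id (fun _ => x₀) with hP
    set χ : V ⊕ Unit → ℝ := Sum.elim (fun _ => 1) (fun _ => 0) with hχ
    set τ : Fin m → V ⊕ Unit := fun i => (psi G).symm (x i) with hτ
    have hident : ∀ s t : V ⊕ Unit, kFun F a x₀ (s, t) =
        (w s * w t + χ s * χ t * F (P s, P t)) / a := fun s t => rfl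
    have hKval : ∀ i j : Fin m, K (x i, x j) = kFun F a x₀ (τ i, τ j) := fun i j => rfl
    have hterm : ∀ i j : Fin m, c i * c j * K (x i, x j) =
        (c i * w (τ i) * (c j * w (τ j)) +
          c i * χ (τ i) * (c j * χ (τ j)) * F (P (τ i), P (τ j))) / a := by
      intro i j
      rw [hKval i j, hident (τ i) (τ j)]
      ring
    have heq : ∑ i : Fin m, ∑ j : Fin m, c i * c j * K (x i, x j) =
        ((∑ i : Fin m, c i * w (τ i)) * (∑ j : Fin m, c j * w (τ j)) +
          ∑ i : Fin m, ∑ j : Fin m,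
            c i * χ (τ i) * (c j * χ (τ j)) * F (P (τ i), P (τ j))) / a := by
      rw [Finset.sum_mul_sum]
      rw [← Finset.sum_add_distrib, Finset.sum_div]
      refine Finset.sum_congr rfl fun i _ => ?_
      rw [← Finset.sum_add_distrib, Finset.sum_div]
      refine Finset.sum_congr rfl fun j _ => ?_
      exact hterm i j
    rw [heq]
    refine div_nonneg (add_nonneg (mul_self_nonneg _) ?_) hapos.le
    have hFpsd := hF.2 m (fun i => P (τ i)) (fun i => c i * χ (τ i))
    simpa using hFpsd
  · -- the constraints
    intro S hS
    rcases indepSpace_two_cases G S with rfl | ⟨x, rfl⟩ | ⟨x, y, hxy, hnadj, rfl⟩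
    · exact absurd rfl hS
    · rw [atFun_sing G (fun p => K p) x]
      have hcard : (sing2 G x).1.1.ncard = 1 := by simp [sing2]
      rw [if_pos hcard]
      have hdle : (1 + F (x, x)) / a ≤ 1 := by
        rw [div_le_one hapos]
        linarith [hdiag x]
      have h1 := hKes x
      have h2 := hKse x
      have h3 := hKss x x
      linarith [h1, h2, h3]
    · rw [atFun_pair G (fun p => K p) x y hxy hnadj]
      have hcard : ¬ (pair2 G x y hnadj).1.1.ncard = 1 := by
        simp [pair2, Set.ncard_pair hxy]
      rw [if_neg hcard]
      have h1 : (1 + F (x, y)) / a ≤ 0 :=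
        div_nonpos_of_nonpos_of_nonneg (by linarith [hoff x y hxy hnadj]) hapos.le
      have h2 : (1 + F (y, x)) / a ≤ 0 :=
        div_nonpos_of_nonpos_of_nonneg (by
          linarith [hoff x y hxy hnadj, hF.1 x y]) hapos.le
      have h3 := hKss x y
      have h4 := hKss y x
      linarith [h1, h2, h3, h4]

end Statement14Aux

/-- For a compact topological packing graph `G`, the first step of the dual
generalized Lasserre hierarchy equals the generalized `θ'`-number: `las_1(G)^* = θ'(G)^*`. -/
theorem lasDual_one_eq_thetaPrime
    {V : Type u} [TopologicalSpace V] [CompactSpace V] [T2Space V]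
    (G : SimpleGraph V) (hG : IsPackingGraph G) :
    lasDualValue G 1 = thetaDualValue G := by
  rcases isEmpty_or_nonempty V with hV | hV
  · -- `V` is empty: both values are `0`.
    have hlas : {v : ℝ | ∃ K : C(IndepSpace G 1 × IndepSpace G 1, ℝ),
        lasDualFeasible G 1 K ∧ v = K (emptyIndep G 1, emptyIndep G 1)} = Set.Ici 0 := by
      ext v
      simp only [Set.mem_setOf_eq, Set.mem_Ici]
      constructor
      · rintro ⟨K, hK, rfl⟩
        exact psd_diag hK.1 _
      · intro hv
        refine ⟨ContinuousMap.const _ v, ⟨⟨fun a b => rfl, ?_⟩, ?_⟩, rfl⟩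
        · intro m x c
          have key : (0:ℝ) ≤ ((∑ i : Fin m, c i) * (∑ j : Fin m, c j)) * v :=
            mul_nonneg (mul_self_nonneg _) hv
          have h2 : ((∑ i : Fin m, c i) * (∑ j : Fin m, c j)) * v =
              ∑ i : Fin m, ∑ j : Fin m, c i * c j * v := by
            rw [Finset.sum_mul_sum, Finset.sum_mul]
            exact Finset.sum_congr rfl fun i _ => Finset.sum_mul _ _ _
          rw [h2] at key
          simpa using key
        · intro S hS
          exact absurd (indepSpace_ext G (Set.eq_empty_of_isEmpty _)) hS
    have htheta : {a : ℝ | ∃ F : C(V × V, ℝ), IsPosDefKernel F ∧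
        (∀ x : V, F (x, x) ≤ a - 1) ∧
        ∀ x y : V, x ≠ y → ¬ G.Adj x y → F (x, y) ≤ -1} = Set.univ := by
      ext a
      simp only [Set.mem_setOf_eq, Set.mem_univ, iff_true]
      refine ⟨ContinuousMap.const _ 0, ⟨fun p q => rfl, ?_⟩,
        fun x => isEmptyElim x, fun x => isEmptyElim x⟩
      intro m x c
      cases m with
      | zero => simp
      | succ n => exact isEmptyElim (x 0)
    rw [lasDualValue, thetaDualValue, hlas, htheta, csInf_Ici]
    have hnb : ¬ BddBelow (Set.univ : Set ℝ) := by
      rintro ⟨b, hb⟩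
      have := hb (Set.mem_univ (b - 1))
      linarith
    rw [Real.sInf_of_not_bddBelow hnb]
  · -- `V` is nonempty: the two feasible-value sets coincide.
    rw [lasDualValue, thetaDualValue]
    congr 1
    ext v
    simp only [Set.mem_setOf_eq]
    constructor
    · rintro ⟨K, hK, rfl⟩
      obtain ⟨F, hF, hd, ho⟩ := mem_theta_of_las G K hK
      exact ⟨F, hF, hd, ho⟩
    · rintro ⟨F, hF, hd, ho⟩
      obtain ⟨K, hK, hKa⟩ := mem_las_of_theta G F v hF hd ho
      exact ⟨K, hK, hKa.symm⟩

end
end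

section
/- Generalized Schur complement for measures: Let X be a compact Hausdorff space and let x_1,…,x_n ∈ X be points whose singletons {x_i} are open. Suppose μ ∈ M(X × X)_sym is a symmetric signed Radon measure such that the matrix A = (μ({(x_i, x_j)}))_{i,j=1}^n is positive definite. Let F ⊆ C(X) be the set of continuous functions vanishing on {x_1,…,x_n}, and for g ∈ F define v_g ∈ ℝ^n by (v_g)_i = μ(1_{{x_i}} ⊗ g). Then μ is positive definite (i.e., μ ∈ M(X × X)_{⪰0}) if and only if μ(g ⊗ g) − v_g^T A^{-1} v_g ≥ 0 for all g ∈ F. -/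
open MeasureTheory Set Topology
open scoped NNReal ENNReal

noncomputable section

universe u

variable {V : Type u}

/-- The pairing of a signed measure with a (bounded) function, via the Jordan
decomposition: `μ(f) = ∫ f dμ⁺ − ∫ f dμ⁻`. -/
def sintegral {X : Type*} [MeasurableSpace X] (μ : MeasureTheory.SignedMeasure X)
    (f : X → ℝ) : ℝ :=
  (∫ x, f x ∂μ.toJordanDecomposition.posPart) - ∫ x, f x ∂μ.toJordanDecomposition.negPart

namespace SchurAux

open MeasureTheory Set Uniformity Filter

variable {Y : Type*} [MeasurableSpace Y] (μ : SignedMeasure Y)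

/-- Integrability with respect to both Jordan parts. -/
def SInt (f : Y → ℝ) : Prop :=
  Integrable f μ.toJordanDecomposition.posPart ∧ Integrable f μ.toJordanDecomposition.negPart

lemma SInt.add {f g : Y → ℝ} (hf : SInt μ f) (hg : SInt μ g) : SInt μ (fun y => f y + g y) :=
  ⟨hf.1.add hg.1, hf.2.add hg.2⟩

lemma SInt.const_mul {f : Y → ℝ} (hf : SInt μ f) (c : ℝ) : SInt μ (fun y => c * f y) :=
  ⟨hf.1.const_mul c, hf.2.const_mul c⟩

lemma SInt.sum {ι : Type*} (s : Finset ι) (f : ι → Y → ℝ) (hf : ∀ i ∈ s, SInt μ (f i)) :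
    SInt μ (fun y => ∑ i ∈ s, f i y) :=
  ⟨integrable_finset_sum s fun i hi => (hf i hi).1,
   integrable_finset_sum s fun i hi => (hf i hi).2⟩

lemma sintegral_add {f g : Y → ℝ} (hf : SInt μ f) (hg : SInt μ g) :
    sintegral μ (fun y => f y + g y) = sintegral μ f + sintegral μ g := by
  unfold sintegral
  rw [integral_add hf.1 hg.1, integral_add hf.2 hg.2]; ring

lemma sintegral_const_mul (f : Y → ℝ) (c : ℝ) :
    sintegral μ (fun y => c * f y) = c * sintegral μ f := by
  unfold sintegral
  rw [MeasureTheory.integral_const_mul, MeasureTheory.integral_const_mul]; ring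

lemma sintegral_sum {ι : Type*} (s : Finset ι) (f : ι → Y → ℝ) (hf : ∀ i ∈ s, SInt μ (f i)) :
    sintegral μ (fun y => ∑ i ∈ s, f i y) = ∑ i ∈ s, sintegral μ (f i) := by
  classical
  induction s using Finset.induction with
  | empty => simp [sintegral]
  | insert a s hni ih =>
    have h1 : SInt μ (f a) := hf a (Finset.mem_insert_self a s)
    have h2 : SInt μ (fun y => ∑ i ∈ s, f i y) :=
      SInt.sum μ s f fun i hi => hf i (Finset.mem_insert_of_mem hi)
    have h3 := sintegral_add μ h1 h2
    simp only [Finset.sum_insert hni]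
    rw [h3, ih fun i hi => hf i (Finset.mem_insert_of_mem hi)]

lemma sintegral_indicator {s : Set Y} (hs : MeasurableSet s) :
    sintegral μ (s.indicator fun _ => (1:ℝ)) = μ s := by
  unfold sintegral
  have h1 := integral_indicator_one (μ := μ.toJordanDecomposition.posPart) hs
  have h2 := integral_indicator_one (μ := μ.toJordanDecomposition.negPart) hs
  simp only [Pi.one_def] at h1 h2
  rw [h1, h2]
  conv_rhs => rw [← μ.toSignedMeasure_toJordanDecomposition]
  rw [JordanDecomposition.toSignedMeasure, VectorMeasure.sub_apply,
    Measure.toSignedMeasure_apply_measurable hs, Measure.toSignedMeasure_apply_measurable hs]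

lemma abs_sintegral_le {f : Y → ℝ} (C : ℝ) (hC : ∀ y, |f y| ≤ C) :
    |sintegral μ f| ≤ C * ((μ.toJordanDecomposition.posPart Set.univ).toReal
      + (μ.toJordanDecomposition.negPart Set.univ).toReal) := by
  unfold sintegral
  have h1 : ‖∫ y, f y ∂μ.toJordanDecomposition.posPart‖ ≤
      C * (μ.toJordanDecomposition.posPart Set.univ).toReal :=
    norm_integral_le_of_norm_le_const (ae_of_all _ fun y => hC y)
  have h2 : ‖∫ y, f y ∂μ.toJordanDecomposition.negPart‖ ≤
      C * (μ.toJordanDecomposition.negPart Set.univ).toReal :=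
    norm_integral_le_of_norm_le_const (ae_of_all _ fun y => hC y)
  calc |_ - _| ≤ ‖∫ y, f y ∂μ.toJordanDecomposition.posPart‖ +
      ‖∫ y, f y ∂μ.toJordanDecomposition.negPart‖ := abs_sub _ _
    _ ≤ _ := by rw [mul_add]; exact add_le_add h1 h2

section Swap

variable {X : Type*} [MeasurableSpace X]

lemma signedMeasure_apply_eq (μ : SignedMeasure X) {s : Set X} (hs : MeasurableSet s) :
    μ s = (μ.toJordanDecomposition.posPart s).toReal
      - (μ.toJordanDecomposition.negPart s).toReal := by
  conv_lhs => rw [← μ.toSignedMeasure_toJordanDecomposition]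
  rw [JordanDecomposition.toSignedMeasure, VectorMeasure.sub_apply,
    Measure.toSignedMeasure_apply_measurable hs, Measure.toSignedMeasure_apply_measurable hs]
  rfl

lemma swap_measure_identity (μ : SignedMeasure (X × X))
    (hsym : ∀ E E' : Set X, MeasurableSet E → MeasurableSet E' →
      μ (E ×ˢ E') = μ (E' ×ˢ E)) :
    μ.toJordanDecomposition.posPart + Measure.map Prod.swap μ.toJordanDecomposition.negPart =
    μ.toJordanDecomposition.negPart + Measure.map Prod.swap μ.toJordanDecomposition.posPart := by
  set P := μ.toJordanDecomposition.posPart with hP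
  set N := μ.toJordanDecomposition.negPart with hN
  have hsw : Measurable (Prod.swap : X × X → X × X) := measurable_swap
  have key : ∀ E E' : Set X, MeasurableSet E → MeasurableSet E' →
      (P + Measure.map Prod.swap N) (E ×ˢ E') = (N + Measure.map Prod.swap P) (E ×ˢ E') := by
    intro E E' hE hE'
    have hEE' : MeasurableSet (E ×ˢ E') := hE.prod hE'
    have hE'E : MeasurableSet (E' ×ˢ E) := hE'.prod hE
    have hpre : (Prod.swap : X × X → X × X) ⁻¹' (E ×ˢ E') = E' ×ˢ E := by
      ext p; simp [Set.mem_prod, and_comm]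
    rw [Measure.add_apply, Measure.add_apply, Measure.map_apply hsw hEE',
      Measure.map_apply hsw hEE', hpre]
    have h1 := signedMeasure_apply_eq μ hEE'
    have h2 := signedMeasure_apply_eq μ hE'E
    have h3 := hsym E E' hE hE'
    have fa : P (E ×ˢ E') ≠ ⊤ := measure_ne_top _ _
    have fb : N (E' ×ˢ E) ≠ ⊤ := measure_ne_top _ _
    have fc : N (E ×ˢ E') ≠ ⊤ := measure_ne_top _ _
    have fd : P (E' ×ˢ E) ≠ ⊤ := measure_ne_top _ _
    rw [← ENNReal.toReal_eq_toReal_iff' (by finiteness) (by finiteness)]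
    rw [ENNReal.toReal_add fa fb, ENNReal.toReal_add fc fd]
    rw [h1, h2] at h3
    linarith
  refine MeasureTheory.ext_of_generate_finite _ generateFrom_prod.symm isPiSystem_prod ?_ ?_
  · rintro s ⟨E, hE, E', hE', rfl⟩
    exact key E E' hE hE'
  · have := key Set.univ Set.univ MeasurableSet.univ MeasurableSet.univ
    rwa [Set.univ_prod_univ] at this

lemma sintegral_swap (μ : SignedMeasure (X × X))
    (hsym : ∀ E E' : Set X, MeasurableSet E → MeasurableSet E' →
      μ (E ×ˢ E') = μ (E' ×ˢ E))
    {F : X × X → ℝ}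
    (h1 : Integrable F μ.toJordanDecomposition.posPart)
    (h2 : Integrable F μ.toJordanDecomposition.negPart)
    (h3 : Integrable (fun p => F (Prod.swap p)) μ.toJordanDecomposition.posPart)
    (h4 : Integrable (fun p => F (Prod.swap p)) μ.toJordanDecomposition.negPart) :
    sintegral μ (fun p => F (Prod.swap p)) = sintegral μ F := by
  set P := μ.toJordanDecomposition.posPart with hP
  set N := μ.toJordanDecomposition.negPart with hN
  have key := swap_measure_identity μ hsym
  have ecoe : ⇑(MeasurableEquiv.prodComm (α := X) (β := X)) = (Prod.swap : X × X → X × X) := rfl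
  have mapP : Measure.map Prod.swap P =
      Measure.map (⇑(MeasurableEquiv.prodComm (α := X) (β := X))) P := by rw [ecoe]
  have mapN : Measure.map Prod.swap N =
      Measure.map (⇑(MeasurableEquiv.prodComm (α := X) (β := X))) N := by rw [ecoe]
  have i1 : Integrable F (Measure.map Prod.swap N) := by
    rw [mapN, integrable_map_equiv]; exact h4
  have i2 : Integrable F (Measure.map Prod.swap P) := by
    rw [mapP, integrable_map_equiv]; exact h3
  have e1 : ∫ p, F p ∂(P + Measure.map Prod.swap N) =
      ∫ p, F p ∂(N + Measure.map Prod.swap P) := by rw [key]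
  rw [integral_add_measure h1 i1, integral_add_measure h2 i2] at e1
  have e2 : ∫ p, F p ∂(Measure.map Prod.swap N) = ∫ p, F (Prod.swap p) ∂N := by
    rw [mapN, MeasureTheory.integral_map_equiv]; rfl
  have e3 : ∫ p, F p ∂(Measure.map Prod.swap P) = ∫ p, F (Prod.swap p) ∂P := by
    rw [mapP, MeasureTheory.integral_map_equiv]; rfl
  rw [e2, e3] at e1
  unfold sintegral
  rw [← hP, ← hN]
  linarith

end Swap

section Topo

variable {X : Type*} [TopologicalSpace X] [CompactSpace X] [T2Space X]

omit [CompactSpace X] [T2Space X] in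
lemma continuous_indicator_clopen {s : Set X} (ho : IsOpen s) (hc : IsClosed s) :
    Continuous (s.indicator fun _ => (1:ℝ)) := by
  have : IsLocallyConstant (s.indicator fun _ => (1:ℝ)) := by
    intro t
    by_cases h1 : (1:ℝ) ∈ t <;> by_cases h0 : (0:ℝ) ∈ t
    · convert isOpen_univ
      ext y; simp only [mem_preimage, mem_univ, iff_true, Set.indicator]
      split <;> assumption
    · convert ho
      ext y; simp only [mem_preimage, Set.indicator]
      split <;> simp_all
    · convert hc.isOpen_compl
      ext y; simp only [mem_preimage, Set.indicator, mem_compl_iff]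
      split <;> simp_all
    · convert isOpen_empty
      ext y; simp only [mem_preimage, Set.indicator, mem_empty_iff_false, iff_false]
      split <;> simp_all
  exact this.continuous

omit [T2Space X] in
lemma integrable_of_continuous [MeasurableSpace X] (ν : Measure X) [IsFiniteMeasure ν] {f : X → ℝ}
    (hf : Continuous f) (hm : AEStronglyMeasurable f ν) : Integrable f ν := by
  obtain ⟨C, hC⟩ := (isCompact_range hf).isBounded.exists_norm_le
  exact Integrable.mono' (integrable_const C) hm
    (ae_of_all _ fun y => hC _ (mem_range_self y))

lemma stronglyMeasurable_of_continuous_prod [MeasurableSpace X] [BorelSpace X]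
    {K : X × X → ℝ} (hK : Continuous K) : StronglyMeasurable K := by
  classical
  set A : Subalgebra ℝ C(X × X, ℝ) := Algebra.adjoin ℝ
    ({h | ∃ f : C(X, ℝ), h = f.comp ⟨Prod.fst, continuous_fst⟩} ∪
     {h | ∃ f : C(X, ℝ), h = f.comp ⟨Prod.snd, continuous_snd⟩}) with hAdef
  have hmeas : ∀ h ∈ A, Measurable (h : X × X → ℝ) := by
    intro h hh
    rw [hAdef] at hh
    induction hh using Algebra.adjoin_induction with
    | mem g hg =>
      rcases hg with ⟨f, rfl⟩ | ⟨f, rfl⟩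
      · exact (f.continuous.measurable).comp measurable_fst
      · exact (f.continuous.measurable).comp measurable_snd
    | algebraMap r =>
      have : ⇑((algebraMap ℝ C(X × X, ℝ)) r) = fun _ : X × X => r := rfl
      rw [this]; exact measurable_const
    | add a b _ _ ha hb => exact ha.add hb
    | mul a b _ _ ha hb => exact ha.mul hb
  have hsep : A.SeparatesPoints := by
    rintro ⟨a, b⟩ ⟨c, d⟩ hne
    have : a ≠ c ∨ b ≠ d := by
      by_contra h; push_neg at h; exact hne (Prod.ext h.1 h.2)
    rcases this with h | h
    · obtain ⟨f, hf0, hf1, -⟩ := exists_continuous_zero_one_of_isClosed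
        (isClosed_singleton (x := a)) (isClosed_singleton (x := c))
        (by simp [Set.disjoint_singleton, h])
      refine ⟨_, ⟨f.comp ⟨Prod.fst, continuous_fst⟩,
        Algebra.subset_adjoin (Or.inl ⟨f, rfl⟩), rfl⟩, ?_⟩
      simp only [ContinuousMap.comp_apply, ContinuousMap.coe_mk]
      rw [hf0 rfl, hf1 rfl]; norm_num
    · obtain ⟨f, hf0, hf1, -⟩ := exists_continuous_zero_one_of_isClosed
        (isClosed_singleton (x := b)) (isClosed_singleton (x := d))
        (by simp [Set.disjoint_singleton, h])
      refine ⟨_, ⟨f.comp ⟨Prod.snd, continuous_snd⟩,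
        Algebra.subset_adjoin (Or.inr ⟨f, rfl⟩), rfl⟩, ?_⟩
      simp only [ContinuousMap.comp_apply, ContinuousMap.coe_mk]
      rw [hf0 rfl, hf1 rfl]; norm_num
  have happrox : ∀ m : ℕ, ∃ g : A, ∀ p, ‖(g : X × X → ℝ) p - K p‖ < 1 / (m + 1) :=
    fun m => ContinuousMap.exists_mem_subalgebra_near_continuous_of_separatesPoints A hsep K hK
      (1 / (m + 1)) (by positivity)
  choose g hg using happrox
  have htend : ∀ p, Filter.Tendsto (fun m => ((g m : C(X × X, ℝ)) : X × X → ℝ) p)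
      Filter.atTop (nhds (K p)) := by
    intro p
    rw [tendsto_iff_dist_tendsto_zero]
    apply squeeze_zero (fun m => dist_nonneg) (fun m => (le_of_lt (by
      rw [Real.dist_eq]; exact hg m p)))
    exact tendsto_one_div_add_atTop_nhds_zero_nat
  have : Measurable K :=
    measurable_of_tendsto_metrizable (fun m => hmeas _ (g m).2) (tendsto_pi_nhds.mpr htend)
  exact this.stronglyMeasurable

lemma exists_partition (K : X × X → ℝ) (hK : Continuous K) {ε : ℝ} (hε : 0 < ε) :
    ∃ (m : ℕ) (y : Fin m → X) (ρ : Fin m → C(X, ℝ)),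
      (∀ k z, 0 ≤ ρ k z) ∧ (∀ z, ∑ k, ρ k z = 1) ∧
      (∀ (a b : X) (k l : Fin m), ρ k a ≠ 0 → ρ l b ≠ 0 → |K (a, b) - K (y k, y l)| ≤ ε) := by
  classical
  letI : UniformSpace X := uniformSpaceOfCompactR1
  have hUC : UniformContinuous K := CompactSpace.uniformContinuous_of_continuous hK
  have hS : {q : (X × X) × (X × X) | dist (K q.1) (K q.2) < ε} ∈ 𝓤 (X × X) :=
    hUC (Metric.dist_mem_uniformity hε)
  rw [uniformity_prod_eq_comap_prod, Filter.mem_comap] at hS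
  obtain ⟨T, hT, hTsub⟩ := hS
  rw [Filter.mem_prod_iff] at hT
  obtain ⟨W₁, hW₁, W₂, hW₂, hWT⟩ := hT
  have hW₀ : W₁ ∩ W₂ ∈ 𝓤 X := Filter.inter_mem hW₁ hW₂
  obtain ⟨W, ⟨hWmem, hWopen⟩, hWsub⟩ := (uniformity_hasBasis_open (α := X)).mem_iff.mp hW₀
  have hprop : ∀ a a' b b' : X, (a, a') ∈ W → (b, b') ∈ W →
      dist (K (a, b)) (K (a', b')) < ε := by
    intro a a' b b' h1 h2
    have : ((a, b), (a', b')) ∈ (fun q : (X × X) × (X × X) =>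
        ((q.1.1, q.2.1), q.1.2, q.2.2)) ⁻¹' T := by
      apply Set.mem_preimage.2
      apply hWT
      exact ⟨(hWsub h1).1, (hWsub h2).2⟩
    exact hTsub this
  obtain ⟨t, ht⟩ := isCompact_univ.elim_finite_subcover
    (fun z : X => UniformSpace.ball z W) (fun z => UniformSpace.isOpen_ball z hWopen)
    (fun z _ => Set.mem_iUnion.2 ⟨z, UniformSpace.mem_ball_self z hWmem⟩)
  set m := t.card with hm
  set y : Fin m → X := fun k => (t.equivFin.symm k : X) with hy
  have hcover : Set.univ ⊆ ⋃ k : Fin m, UniformSpace.ball (y k) W := by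
    intro z hz
    obtain ⟨_, ⟨z', rfl⟩, _, ⟨hz', rfl⟩, hmem⟩ := ht hz
    exact Set.mem_iUnion.2 ⟨t.equivFin ⟨z', hz'⟩, by simpa [hy, Equiv.symm_apply_apply] using hmem⟩
  obtain ⟨ρ, hρsub⟩ := PartitionOfUnity.exists_isSubordinate isClosed_univ
    (fun k : Fin m => UniformSpace.ball (y k) W)
    (fun k => UniformSpace.isOpen_ball _ hWopen) hcover
  refine ⟨m, y, fun k => ρ k, fun k z => ρ.nonneg k z, ?_, ?_⟩
  · intro z
    have := ρ.sum_eq_one (Set.mem_univ z)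
    rwa [finsum_eq_sum_of_fintype] at this
  · intro a b k l hka hlb
    have ha : a ∈ UniformSpace.ball (y k) W := hρsub k (subset_tsupport _ hka)
    have hb : b ∈ UniformSpace.ball (y l) W := hρsub l (subset_tsupport _ hlb)
    have h := hprop (y k) a (y l) b ha hb
    calc |K (a, b) - K (y k, y l)| = dist (K (a, b)) (K (y k, y l)) := (Real.dist_eq _ _).symm
      _ ≤ ε := le_of_lt (by rwa [dist_comm] at h)

end Topo

end SchurAux

open SchurAux

open Matrix in
/-- **generalized Schur complement for measures.**  Let `X` be a compact
Hausdorff space, `x₁, …, xₙ ∈ X` points whose singletons are open, and `μ` a symmetric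
signed Radon measure on `X × X` such that `A = (μ({(xᵢ, xⱼ)}))ᵢⱼ` is positive definite.
With `F ⊆ C(X)` the continuous functions vanishing on `{x₁, …, xₙ}` and
`(v_g)ᵢ = μ(1_{xᵢ} ⊗ g)`, the measure `μ` is positive definite (lies in the dual cone of
the positive definite continuous kernels) if and only if
`μ(g ⊗ g) − v_gᵀ A⁻¹ v_g ≥ 0` for all `g ∈ F`. -/
theorem generalized_schur_complement_for_measures
    {X : Type*} [TopologicalSpace X] [CompactSpace X] [T2Space X]
    [MeasurableSpace X] [BorelSpace X]
    (n : ℕ) (x : Fin n → X) (hx : ∀ i, IsOpen {x i})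
    (μ : MeasureTheory.SignedMeasure (X × X))
    (hsym : ∀ E E' : Set X, MeasurableSet E → MeasurableSet E' →
      μ (E ×ˢ E') = μ (E' ×ˢ E))
    (hreg : μ.toJordanDecomposition.posPart.Regular ∧
      μ.toJordanDecomposition.negPart.Regular)
    (A : Matrix (Fin n) (Fin n) ℝ) (hA : ∀ i j, A i j = μ {(x i, x j)})
    (hApd : A.PosDef) :
    (∀ K : C(X × X, ℝ), IsPosDefKernel K → 0 ≤ sintegral μ (fun p => K p)) ↔
    ∀ g : X → ℝ, Continuous g → (∀ i, g (x i) = 0) →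
      (fun i => sintegral μ (fun p => Set.indicator {x i} (fun _ => (1 : ℝ)) p.1 * g p.2)) ⬝ᵥ
          A⁻¹ *ᵥ
          (fun i => sintegral μ (fun p => Set.indicator {x i} (fun _ => (1 : ℝ)) p.1 * g p.2))
        ≤ sintegral μ (fun p => g p.1 * g p.2) := by
  classical
  have hxc : ∀ i, IsClosed ({x i} : Set X) := fun _ => isClosed_singleton
  set e : Fin n → X → ℝ := fun i => Set.indicator {x i} (fun _ => (1:ℝ)) with he
  have hecont : ∀ i, Continuous (e i) :=
    fun i => continuous_indicator_clopen (hx i) (hxc i)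
  have hprodcont : ∀ (f g : X → ℝ), Continuous f → Continuous g →
      Continuous (fun p : X × X => f p.1 * g p.2) :=
    fun f g hf hg => (hf.comp continuous_fst).mul (hg.comp continuous_snd)
  have hSIprod : ∀ (f g : X → ℝ), Continuous f → Continuous g →
      SInt μ (fun p : X × X => f p.1 * g p.2) := by
    intro f g hf hg
    have hm : Measurable fun p : X × X => f p.1 * g p.2 :=
      ((hf.measurable).comp measurable_fst).mul ((hg.measurable).comp measurable_snd)
    exact ⟨integrable_of_continuous _ (hprodcont f g hf hg) hm.aestronglyMeasurable,
      integrable_of_continuous _ (hprodcont f g hf hg) hm.aestronglyMeasurable⟩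
  set B : (X → ℝ) → (X → ℝ) → ℝ := fun f g => sintegral μ (fun p => f p.1 * g p.2) with hB
  set v : (X → ℝ) → Fin n → ℝ := fun g i => B (e i) g with hv
  -- values on pairs of indicators
  have hBee : ∀ i j, B (e i) (e j) = A i j := by
    intro i j
    have hpt : (fun p : X × X => e i p.1 * e j p.2) =
        Set.indicator (({x i} : Set X) ×ˢ ({x j} : Set X)) (fun _ => (1:ℝ)) := by
      funext p
      rcases p with ⟨a, b⟩
      by_cases h1 : a = x i <;> by_cases h2 : b = x j <;>
        simp [he, Set.indicator_apply, Set.mem_prod, h1, h2]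
    show sintegral μ (fun p : X × X => e i p.1 * e j p.2) = A i j
    rw [hpt, sintegral_indicator μ (((hx i).measurableSet).prod ((hx j).measurableSet)),
      hA i j, Set.singleton_prod_singleton]
  -- symmetry of B
  have hBcomm : ∀ f g : X → ℝ, Continuous f → Continuous g → B f g = B g f := by
    intro f g hf hg
    have h1 := hSIprod g f hg hf
    have h2 := hSIprod f g hf hg
    have hfun : (fun p : X × X => (fun q : X × X => g q.1 * f q.2) (Prod.swap p))
        = fun p : X × X => f p.1 * g p.2 := by
      funext p; exact mul_comm _ _
    have h3 : Integrable (fun p : X × X => (fun q : X × X => g q.1 * f q.2) (Prod.swap p))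
        μ.toJordanDecomposition.posPart := by rw [hfun]; exact h2.1
    have h4 : Integrable (fun p : X × X => (fun q : X × X => g q.1 * f q.2) (Prod.swap p))
        μ.toJordanDecomposition.negPart := by rw [hfun]; exact h2.2
    have hswap := sintegral_swap μ hsym h1.1 h1.2 h3 h4
    show sintegral μ (fun p : X × X => f p.1 * g p.2) = sintegral μ (fun p : X × X => g p.1 * f p.2)
    rw [← hfun]
    exact hswap
  -- matrix facts
  have hAdet : IsUnit A.det := isUnit_iff_ne_zero.mpr (ne_of_gt hApd.det_pos)
  have hAA : A * A⁻¹ = 1 := Matrix.mul_nonsing_inv A hAdet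
  have hAsymm : Aᵀ = A := by
    ext i j
    have := hApd.isHermitian.apply i j
    rw [star_trivial] at this
    exact this
  -- the key quadratic expansion
  have key : ∀ (g : X → ℝ), Continuous g → ∀ c : Fin n → ℝ,
      B (fun y => g y + ∑ i, c i * e i y) (fun y => g y + ∑ i, c i * e i y)
        = B g g + 2 * (c ⬝ᵥ v g) + c ⬝ᵥ A *ᵥ c := by
    intro g hg c
    have hI1 : SInt μ (fun p : X × X => g p.1 * g p.2) := hSIprod g g hg hg
    have hI2 : SInt μ (fun p : X × X => ∑ i, c i * (e i p.1 * g p.2)) :=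
      SInt.sum μ Finset.univ (fun i => fun p : X × X => c i * (e i p.1 * g p.2)) (fun i _ =>
        SInt.const_mul μ (hSIprod (e i) g (hecont i) hg) (c i))
    have hI3 : SInt μ (fun p : X × X => ∑ i, c i * (g p.1 * e i p.2)) :=
      SInt.sum μ Finset.univ (fun i => fun p : X × X => c i * (g p.1 * e i p.2)) (fun i _ =>
        SInt.const_mul μ (hSIprod g (e i) hg (hecont i)) (c i))
    have hI4 : SInt μ (fun p : X × X => ∑ i, ∑ j, (c i * c j) * (e i p.1 * e j p.2)) :=
      SInt.sum μ Finset.univ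
        (fun i => fun p : X × X => ∑ j, (c i * c j) * (e i p.1 * e j p.2)) (fun i _ =>
        SInt.sum μ Finset.univ
          (fun j => fun p : X × X => (c i * c j) * (e i p.1 * e j p.2)) (fun j _ =>
          SInt.const_mul μ (hSIprod (e i) (e j) (hecont i) (hecont j)) (c i * c j)))
    have hpt : (fun p : X × X => (fun y => g y + ∑ i, c i * e i y) p.1 *
        (fun y => g y + ∑ i, c i * e i y) p.2)
        = fun p : X × X => g p.1 * g p.2 + ((∑ i, c i * (e i p.1 * g p.2)) +
          ((∑ i, c i * (g p.1 * e i p.2)) + ∑ i, ∑ j, (c i * c j) * (e i p.1 * e j p.2))) := by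
      funext p
      have e1 : (∑ i, c i * e i p.1) * g p.2 = ∑ i, c i * (e i p.1 * g p.2) := by
        rw [Finset.sum_mul]; exact Finset.sum_congr rfl fun i _ => by ring
      have e2 : g p.1 * (∑ i, c i * e i p.2) = ∑ i, c i * (g p.1 * e i p.2) := by
        rw [Finset.mul_sum]; exact Finset.sum_congr rfl fun i _ => by ring
      have e3 : (∑ i, c i * e i p.1) * (∑ j, c j * e j p.2)
          = ∑ i, ∑ j, (c i * c j) * (e i p.1 * e j p.2) := by
        rw [Finset.sum_mul_sum]
        exact Finset.sum_congr rfl fun i _ => Finset.sum_congr rfl fun j _ => by ring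
      show (g p.1 + ∑ i, c i * e i p.1) * (g p.2 + ∑ i, c i * e i p.2) = _
      calc (g p.1 + ∑ i, c i * e i p.1) * (g p.2 + ∑ i, c i * e i p.2)
          = g p.1 * g p.2 + ((∑ i, c i * e i p.1) * g p.2
            + (g p.1 * (∑ i, c i * e i p.2)
              + (∑ i, c i * e i p.1) * (∑ j, c j * e j p.2))) := by ring
        _ = _ := by rw [e1, e2, e3]
    have s1 : B (fun y => g y + ∑ i, c i * e i y) (fun y => g y + ∑ i, c i * e i y)
        = sintegral μ (fun p : X × X => g p.1 * g p.2)
          + (sintegral μ (fun p : X × X => ∑ i, c i * (e i p.1 * g p.2))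
          + (sintegral μ (fun p : X × X => ∑ i, c i * (g p.1 * e i p.2))
          + sintegral μ (fun p : X × X => ∑ i, ∑ j, (c i * c j) * (e i p.1 * e j p.2)))) := by
      show sintegral μ _ = _
      rw [hpt]
      rw [sintegral_add μ hI1 (SInt.add μ hI2 (SInt.add μ hI3 hI4))]
      rw [sintegral_add μ hI2 (SInt.add μ hI3 hI4)]
      rw [sintegral_add μ hI3 hI4]
    have s2 : sintegral μ (fun p : X × X => ∑ i, c i * (e i p.1 * g p.2))
        = ∑ i, c i * v g i := by
      rw [sintegral_sum μ Finset.univ (fun i => fun p : X × X => c i * (e i p.1 * g p.2))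
        (fun i _ => SInt.const_mul μ (hSIprod (e i) g (hecont i) hg) (c i))]
      exact Finset.sum_congr rfl fun i _ => sintegral_const_mul μ _ (c i)
    have s3 : sintegral μ (fun p : X × X => ∑ i, c i * (g p.1 * e i p.2))
        = ∑ i, c i * v g i := by
      rw [sintegral_sum μ Finset.univ (fun i => fun p : X × X => c i * (g p.1 * e i p.2))
        (fun i _ => SInt.const_mul μ (hSIprod g (e i) hg (hecont i)) (c i))]
      refine Finset.sum_congr rfl fun i _ => ?_
      rw [sintegral_const_mul μ _ (c i)]
      have : B g (e i) = B (e i) g := hBcomm g (e i) hg (hecont i)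
      show c i * B g (e i) = c i * B (e i) g
      rw [this]
    have s4 : sintegral μ (fun p : X × X => ∑ i, ∑ j, (c i * c j) * (e i p.1 * e j p.2))
        = ∑ i, ∑ j, (c i * c j) * A i j := by
      rw [sintegral_sum μ Finset.univ
        (fun i => fun p : X × X => ∑ j, (c i * c j) * (e i p.1 * e j p.2))
        (fun i _ => SInt.sum μ Finset.univ _ (fun j _ =>
          SInt.const_mul μ (hSIprod (e i) (e j) (hecont i) (hecont j)) (c i * c j)))]
      refine Finset.sum_congr rfl fun i _ => ?_
      rw [sintegral_sum μ Finset.univ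
        (fun j => fun p : X × X => (c i * c j) * (e i p.1 * e j p.2))
        (fun j _ => SInt.const_mul μ (hSIprod (e i) (e j) (hecont i) (hecont j)) (c i * c j))]
      refine Finset.sum_congr rfl fun j _ => ?_
      rw [sintegral_const_mul μ _ (c i * c j)]
      show (c i * c j) * B (e i) (e j) = _
      rw [hBee i j]
    have hdot : c ⬝ᵥ v g = ∑ i, c i * v g i := rfl
    have hquad : c ⬝ᵥ A *ᵥ c = ∑ i, ∑ j, (c i * c j) * A i j := by
      show ∑ i, c i * (A *ᵥ c) i = _
      refine Finset.sum_congr rfl fun i _ => ?_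
      show c i * ∑ j, A i j * c j = _
      rw [Finset.mul_sum]
      exact Finset.sum_congr rfl fun j _ => by ring
    rw [s1, s2, s3, s4, hdot, hquad]
    ring
  constructor
  · -- forward direction
    intro hpos g hgc hg0
    set w : Fin n → ℝ := v g with hwdef
    set c : Fin n → ℝ := -(A⁻¹ *ᵥ w) with hcdef
    set h : X → ℝ := fun y => g y + ∑ i, c i * e i y with hhdef
    have hhc : Continuous h := by
      rw [hhdef]
      exact hgc.add (continuous_finset_sum _ fun i _ => continuous_const.mul (hecont i))
    have hKpd : IsPosDefKernel (⟨fun p : X × X => h p.1 * h p.2, hprodcont h h hhc hhc⟩ :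
        C(X × X, ℝ)) := by
      constructor
      · intro a b
        show h a * h b = h b * h a
        exact mul_comm _ _
      · intro m z d
        show 0 ≤ ∑ i : Fin m, ∑ j : Fin m, d i * d j * (h (z i) * h (z j))
        have hsq : ∑ i : Fin m, ∑ j : Fin m, d i * d j * (h (z i) * h (z j))
            = (∑ i : Fin m, d i * h (z i)) * (∑ j : Fin m, d j * h (z j)) := by
          rw [Finset.sum_mul_sum]
          exact Finset.sum_congr rfl fun i _ => Finset.sum_congr rfl fun j _ => by ring
        rw [hsq, ← sq]
        exact sq_nonneg _
    have h0 : 0 ≤ B h h := hpos _ hKpd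
    rw [hhdef] at h0
    rw [key g hgc c] at h0
    have hAw : A *ᵥ (A⁻¹ *ᵥ w) = w := by
      rw [Matrix.mulVec_mulVec, hAA, Matrix.one_mulVec]
    have e1 : c ⬝ᵥ v g = -(w ⬝ᵥ A⁻¹ *ᵥ w) := by
      rw [hcdef, neg_dotProduct, dotProduct_comm]
    have e2 : c ⬝ᵥ A *ᵥ c = w ⬝ᵥ A⁻¹ *ᵥ w := by
      rw [hcdef, Matrix.mulVec_neg, neg_dotProduct, dotProduct_neg, neg_neg,
        hAw, dotProduct_comm]
    rw [e1, e2] at h0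
    show w ⬝ᵥ A⁻¹ *ᵥ w ≤ B g g
    linarith
  · -- backward direction
    intro hyp K hKpd
    have hxinj : Function.Injective x := by
      intro i j hij
      by_contra hne
      set cc : Fin n → ℝ := fun k => (if k = i then (1:ℝ) else 0) - (if k = j then 1 else 0)
        with hcc
      have hcc0 : cc ≠ 0 := by
        intro h0
        have h1 := congrFun h0 i
        simp only [hcc, Pi.zero_apply, if_pos rfl, if_neg hne] at h1
        norm_num at h1
      have hcol : ∀ k, (A *ᵥ cc) k = 0 := by
        intro k
        show ∑ l, A k l * cc l = 0
        have hsplit : ∀ l, A k l * cc l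
            = A k l * (if l = i then 1 else 0) - A k l * (if l = j then 1 else 0) := by
          intro l; rw [hcc]; ring
        rw [Finset.sum_congr rfl fun l _ => hsplit l, Finset.sum_sub_distrib]
        have t1 : ∑ l, A k l * (if l = i then (1:ℝ) else 0) = A k i := by
          simp [mul_ite]
        have t2 : ∑ l, A k l * (if l = j then (1:ℝ) else 0) = A k j := by
          simp [mul_ite]
        rw [t1, t2, hA k i, hA k j, hij]
        ring
      have hquad := hApd.dotProduct_mulVec_pos hcc0
      have hz : star cc ⬝ᵥ A *ᵥ cc = 0 := by
        rw [show star cc = cc from rfl]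
        show ∑ k, cc k * (A *ᵥ cc) k = 0
        rw [Finset.sum_congr rfl fun k _ => by rw [hcol k, mul_zero]]
        simp
      rw [hz] at hquad
      exact lt_irrefl 0 hquad
    -- every continuous rank-one square pairs nonnegatively
    have hBnn : ∀ f : X → ℝ, Continuous f → 0 ≤ B f f := by
      intro f hf
      set cf : Fin n → ℝ := fun i => f (x i) with hcf
      set g : X → ℝ := fun y => f y + ∑ i, (-cf i) * e i y with hgdef
      have hgc : Continuous g := by
        rw [hgdef]
        exact hf.add (continuous_finset_sum _ fun i _ => continuous_const.mul (hecont i))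
      have hfeq : f = fun y => g y + ∑ i, cf i * e i y := by
        funext y
        rw [hgdef]
        have : ∑ i, (-cf i) * e i y + ∑ i, cf i * e i y = 0 := by
          rw [← Finset.sum_add_distrib]
          exact Finset.sum_eq_zero fun i _ => by ring
        show f y = (f y + ∑ i, (-cf i) * e i y) + ∑ i, cf i * e i y
        linarith
      have hei : ∀ i j, e i (x j) = if j = i then (1:ℝ) else 0 := by
        intro i j
        by_cases hji : j = i
        · rw [hji, if_pos rfl]
          simp [he, Set.indicator_of_mem]
        · have hxx : x j ∉ ({x i} : Set X) := by
            simp only [Set.mem_singleton_iff]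
            exact fun hcontra => hji (hxinj hcontra)
          rw [if_neg hji]
          exact Set.indicator_of_notMem hxx _
      have hg0 : ∀ j, g (x j) = 0 := by
        intro j
        have hsum : ∑ i, (-cf i) * e i (x j) = -cf j := by
          rw [Finset.sum_congr rfl fun i _ => by rw [hei i j]]
          simp [mul_ite]
        show f (x j) + ∑ i, (-cf i) * e i (x j) = 0
        rw [hsum]
        show f (x j) + -(f (x j)) = 0
        ring
      have hSchur : v g ⬝ᵥ A⁻¹ *ᵥ v g ≤ B g g := hyp g hgc hg0
      have hff : B f f = B g g + 2 * (cf ⬝ᵥ v g) + cf ⬝ᵥ A *ᵥ cf := by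
        conv_lhs => rw [hfeq]
        exact key g hgc cf
      set w := v g with hwdef
      have hAw : A *ᵥ (A⁻¹ *ᵥ w) = w := by
        rw [Matrix.mulVec_mulVec, hAA, Matrix.one_mulVec]
      have hpsd := hApd.posSemidef.dotProduct_mulVec_nonneg (cf + A⁻¹ *ᵥ w)
      rw [show star (cf + A⁻¹ *ᵥ w) = cf + A⁻¹ *ᵥ w from rfl] at hpsd
      have hexp : (cf + A⁻¹ *ᵥ w) ⬝ᵥ A *ᵥ (cf + A⁻¹ *ᵥ w)
          = cf ⬝ᵥ A *ᵥ cf + 2 * (cf ⬝ᵥ w) + w ⬝ᵥ A⁻¹ *ᵥ w := by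
        rw [add_dotProduct, Matrix.mulVec_add, dotProduct_add,
          dotProduct_add, hAw]
        have hterm : (A⁻¹ *ᵥ w) ⬝ᵥ (A *ᵥ cf) = cf ⬝ᵥ w := by
          rw [Matrix.dotProduct_mulVec, ← Matrix.mulVec_transpose, hAsymm, hAw,
            dotProduct_comm]
        have hterm2 : (A⁻¹ *ᵥ w) ⬝ᵥ w = w ⬝ᵥ A⁻¹ *ᵥ w := dotProduct_comm _ _
        rw [hterm, hterm2]
        ring
      rw [hexp] at hpsd
      rw [hff]
      linarith
    -- approximation of a general positive definite kernel
    set Ct : ℝ := (μ.toJordanDecomposition.posPart Set.univ).toReal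
      + (μ.toJordanDecomposition.negPart Set.univ).toReal with hCt
    have hCt0 : 0 ≤ Ct := by
      rw [hCt]; positivity
    have hKsm : StronglyMeasurable (fun p : X × X => K p) :=
      stronglyMeasurable_of_continuous_prod K.continuous
    have hKint : SInt μ (fun p : X × X => K p) :=
      ⟨integrable_of_continuous _ K.continuous hKsm.aestronglyMeasurable,
       integrable_of_continuous _ K.continuous hKsm.aestronglyMeasurable⟩
    suffices hfin : ∀ ε : ℝ, 0 < ε → -(ε * Ct) ≤ sintegral μ (fun p => K p) by
      by_contra hneg
      push_neg at hneg
      set s := sintegral μ (fun p : X × X => K p) with hs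
      have hε : 0 < -s / (Ct + 1) := div_pos (neg_pos.mpr hneg) (by linarith)
      have h1 := hfin _ hε
      have h2 : (-s / (Ct + 1)) * Ct < (-s / (Ct + 1)) * (Ct + 1) :=
        mul_lt_mul_of_pos_left (by linarith) hε
      have h3 : (-s / (Ct + 1)) * (Ct + 1) = -s := by field_simp
      linarith
    intro ε hε
    obtain ⟨m, y, ρ, hρ0, hρ1, hρprop⟩ :=
      exists_partition (fun p : X × X => K p) K.continuous hε
    set M : Matrix (Fin m) (Fin m) ℝ := fun k l => K (y k, y l) with hM
    have hMpsd : M.PosSemidef := by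
      refine Matrix.PosSemidef.of_dotProduct_mulVec_nonneg ?_ ?_
      · ext k l
        show star (M l k) = M k l
        rw [star_trivial]
        exact hKpd.1 (y l) (y k)
      · intro u
        rw [show star u = u from rfl]
        have hrepr : u ⬝ᵥ M *ᵥ u = ∑ k, ∑ l, u k * u l * K (y k, y l) := by
          show ∑ k, u k * (M *ᵥ u) k = _
          refine Finset.sum_congr rfl fun k _ => ?_
          show u k * ∑ l, M k l * u l = _
          rw [Finset.mul_sum]
          refine Finset.sum_congr rfl fun l _ => ?_
          show u k * (K (y k, y l) * u l) = _
          ring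
        rw [hrepr]
        exact hKpd.2 m y u
    obtain ⟨Cm, hCm⟩ : ∃ B : Matrix (Fin m) (Fin m) ℝ, M = Bᴴ * B := by
      open scoped MatrixOrder in
      obtain ⟨B, hB⟩ := CStarAlgebra.nonneg_iff_eq_star_mul_self.mp hMpsd.nonneg
      exact ⟨B, by rw [hB, Matrix.star_eq_conjTranspose]⟩
    set f : Fin m → X → ℝ := fun j z => ∑ k, Cm j k * ρ k z with hf
    have hfc : ∀ j, Continuous (f j) :=
      fun j => continuous_finset_sum _ fun k _ => continuous_const.mul (ρ k).continuous
    set Kap : X × X → ℝ := fun p => ∑ j, f j p.1 * f j p.2 with hKap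
    have hKapint : SInt μ Kap :=
      SInt.sum μ Finset.univ (fun j => fun p : X × X => f j p.1 * f j p.2)
        fun j _ => hSIprod (f j) (f j) (hfc j) (hfc j)
    have hKapnn : 0 ≤ sintegral μ Kap := by
      have hsum := sintegral_sum μ Finset.univ (fun j => fun p : X × X => f j p.1 * f j p.2)
        (fun j _ => hSIprod (f j) (f j) (hfc j) (hfc j))
      calc (0:ℝ) ≤ ∑ j, sintegral μ (fun p : X × X => f j p.1 * f j p.2) :=
            Finset.sum_nonneg fun j _ => hBnn (f j) (hfc j)
        _ = sintegral μ Kap := hsum.symm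
    have hMent : ∀ k l, M k l = ∑ j, Cm j k * Cm j l := by
      intro k l
      rw [hCm, Matrix.mul_apply]
      exact Finset.sum_congr rfl fun j _ => by
        rw [Matrix.conjTranspose_apply, star_trivial]
    have hKap2 : ∀ a b : X, Kap (a, b) = ∑ k, ∑ l, (ρ k a * ρ l b) * M k l := by
      intro a b
      calc Kap (a, b) = ∑ j, (∑ k, Cm j k * ρ k a) * (∑ l, Cm j l * ρ l b) := rfl
        _ = ∑ j, ∑ k, ∑ l, (Cm j k * ρ k a) * (Cm j l * ρ l b) := by
            refine Finset.sum_congr rfl fun j _ => ?_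
            rw [Finset.sum_mul_sum]
        _ = ∑ k, ∑ j, ∑ l, (Cm j k * ρ k a) * (Cm j l * ρ l b) := Finset.sum_comm
        _ = ∑ k, ∑ l, ∑ j, (Cm j k * ρ k a) * (Cm j l * ρ l b) := by
            exact Finset.sum_congr rfl fun k _ => Finset.sum_comm
        _ = ∑ k, ∑ l, (ρ k a * ρ l b) * ∑ j, Cm j k * Cm j l := by
            refine Finset.sum_congr rfl fun k _ => Finset.sum_congr rfl fun l _ => ?_
            rw [Finset.mul_sum]
            exact Finset.sum_congr rfl fun j _ => by ring
        _ = ∑ k, ∑ l, (ρ k a * ρ l b) * M k l := by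
            exact Finset.sum_congr rfl fun k _ => Finset.sum_congr rfl fun l _ => by
              rw [hMent k l]
    have hbound : ∀ p : X × X, |K p - Kap p| ≤ ε := by
      rintro ⟨a, b⟩
      have hKexp : K (a, b) = ∑ k, ∑ l, (ρ k a * ρ l b) * K (a, b) := by
        calc K (a, b) = ((∑ k, ρ k a) * (∑ l, ρ l b)) * K (a, b) := by
              rw [hρ1 a, hρ1 b]; ring
          _ = (∑ k, ∑ l, ρ k a * ρ l b) * K (a, b) := by rw [Finset.sum_mul_sum]
          _ = ∑ k, (∑ l, ρ k a * ρ l b) * K (a, b) := by rw [Finset.sum_mul]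
          _ = ∑ k, ∑ l, (ρ k a * ρ l b) * K (a, b) := by
              exact Finset.sum_congr rfl fun k _ => by rw [Finset.sum_mul]
      have hdiff : K (a, b) - Kap (a, b) = ∑ k, ∑ l, (ρ k a * ρ l b) * (K (a, b) - M k l) := by
        rw [hKap2 a b]
        conv_lhs => rw [hKexp]
        rw [← Finset.sum_sub_distrib]
        refine Finset.sum_congr rfl fun k _ => ?_
        rw [← Finset.sum_sub_distrib]
        exact Finset.sum_congr rfl fun l _ => by ring
      show |K (a, b) - Kap (a, b)| ≤ ε
      rw [hdiff]
      calc |∑ k, ∑ l, (ρ k a * ρ l b) * (K (a, b) - M k l)|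
          ≤ ∑ k, |∑ l, (ρ k a * ρ l b) * (K (a, b) - M k l)| :=
            Finset.abs_sum_le_sum_abs _ _
        _ ≤ ∑ k, ∑ l, |(ρ k a * ρ l b) * (K (a, b) - M k l)| :=
            Finset.sum_le_sum fun k _ => Finset.abs_sum_le_sum_abs _ _
        _ ≤ ∑ k, ∑ l, (ρ k a * ρ l b) * ε := by
            refine Finset.sum_le_sum fun k _ => Finset.sum_le_sum fun l _ => ?_
            rw [abs_mul, abs_of_nonneg (mul_nonneg (hρ0 k a) (hρ0 l b))]
            by_cases hka : ρ k a = 0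
            · simp [hka]
            · by_cases hlb : ρ l b = 0
              · simp [hlb]
              · exact mul_le_mul_of_nonneg_left (hρprop a b k l hka hlb)
                  (mul_nonneg (hρ0 k a) (hρ0 l b))
        _ = ((∑ k, ρ k a) * (∑ l, ρ l b)) * ε := by
            rw [Finset.sum_mul_sum, Finset.sum_mul]
            exact Finset.sum_congr rfl fun k _ => by rw [Finset.sum_mul]
        _ = ε := by rw [hρ1 a, hρ1 b]; ring
    have hdiffint : SInt μ (fun p : X × X => K p - Kap p) :=
      ⟨hKint.1.sub hKapint.1, hKint.2.sub hKapint.2⟩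
    have hsplit : sintegral μ (fun p : X × X => K p)
        = sintegral μ Kap + sintegral μ (fun p : X × X => K p - Kap p) := by
      rw [← sintegral_add μ hKapint hdiffint]
      congr 1
      funext p
      ring
    have habs : |sintegral μ (fun p : X × X => K p - Kap p)| ≤ ε * Ct := by
      have := abs_sintegral_le μ (f := fun p : X × X => K p - Kap p) ε (fun p => hbound p)
      rw [hCt]
      exact this
    rw [hsplit]
    have := (abs_le.mp habs).1
    linarith


end
end
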